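/- arXiv:2409.03020 — 9 statements merged into one kernel-verified Lean document; each statement's English description precedes it below -/
import Mathlib

section
/- Let D be a positive integer, let a, q ∈ ℝ^D with a_d > 0 and q_d > 0 for all d, and let g : ℝ → ℝ be concave, nondecreasing and continuous. Assume the coordinates are sorted so that a_1/q_1 ≥ a_2/q_2 ≥ … ≥ a_D/q_D. Then there exists a point x* in the box [0,1]^D that maximizes x ↦ g(∑_{d} a_d x_d) − ∑_d q_d x_d over [0,1]^D and is of greedy prefix form: there is an index k such that x*_d = 1 for all d < k and x*_d = 0 for all d > k. -/
open Finset

/-- Greedy prefix fill dominates any feasible point: same weighted sum, no greater cost. -/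
lemma greedy_dominates_aux
    (D : ℕ) (hD : 0 < D) (a q : Fin D → ℝ)
    (ha : ∀ d, 0 < a d) (hq : ∀ d, 0 < q d)
    (hsorted : ∀ i j : Fin D, i ≤ j → a j / q j ≤ a i / q i)
    (y : Fin D → ℝ) (hy : y ∈ Set.Icc (0 : Fin D → ℝ) 1) :
    ∃ x ∈ Set.Icc (0 : Fin D → ℝ) 1,
      (∑ d, a d * x d) = (∑ d, a d * y d) ∧
      (∑ d, q d * x d) ≤ (∑ d, q d * y d) ∧
      ∃ k : Fin D, (∀ d, d < k → x d = 1) ∧ (∀ d, k < d → x d = 0) := by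
  obtain ⟨hy0, hy1⟩ := hy
  have hy0' : ∀ d, 0 ≤ y d := fun d => hy0 d
  have hy1' : ∀ d, y d ≤ 1 := fun d => hy1 d
  set a' : ℕ → ℝ := fun i => if h : i < D then a ⟨i, h⟩ else 1 with ha'def
  set q' : ℕ → ℝ := fun i => if h : i < D then q ⟨i, h⟩ else 1 with hq'def
  set y' : ℕ → ℝ := fun i => if h : i < D then y ⟨i, h⟩ else 0 with hy'def
  have ha'pos : ∀ i, 0 < a' i := by
    intro i; simp only [ha'def]; split
    · exact ha _
    · norm_num
  have hy'0 : ∀ i, 0 ≤ y' i := by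
    intro i; simp only [hy'def]; split
    · exact hy0' _
    · exact le_rfl
  have hy'1 : ∀ i, y' i ≤ 1 := by
    intro i; simp only [hy'def]; split
    · exact hy1' _
    · norm_num
  have ha'eq : ∀ d : Fin D, a' d.val = a d := by intro d; simp [ha'def]
  have hq'eq : ∀ d : Fin D, q' d.val = q d := by intro d; simp [hq'def]
  have hy'eq : ∀ d : Fin D, y' d.val = y d := by intro d; simp [hy'def]
  set P : ℕ → ℝ := fun m => ∑ i ∈ range m, a' i with hPdef
  set S : ℝ := ∑ i ∈ range D, a' i * y' i with hSdef
  have hPmono : Monotone P := fun m n h =>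
    Finset.sum_le_sum_of_subset_of_nonneg (Finset.range_subset_range.2 h)
      (fun i _ _ => (ha'pos i).le)
  have hS0 : 0 ≤ S := Finset.sum_nonneg fun i _ => mul_nonneg (ha'pos i).le (hy'0 i)
  have hSP : S ≤ P D := Finset.sum_le_sum fun i _ =>
    mul_le_of_le_one_right (ha'pos i).le (hy'1 i)
  set u : ℕ → ℝ := fun i => min S (P (i + 1)) - min S (P i) with hudef
  have hu0 : ∀ i, 0 ≤ u i := fun i =>
    sub_nonneg.2 (min_le_min le_rfl (hPmono (Nat.le_succ i)))
  have hPsucc : ∀ i, P (i + 1) = P i + a' i := fun i => Finset.sum_range_succ _ _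
  have hua : ∀ i, u i ≤ a' i := by
    intro i
    have h1 : min S (P (i + 1)) ≤ min S (P i) + a' i := by
      rw [hPsucc i]
      calc min S (P i + a' i) ≤ min (S + a' i) (P i + a' i) :=
            min_le_min (le_add_of_nonneg_right (ha'pos i).le) le_rfl
        _ = min S (P i) + a' i := min_add_add_right S (P i) (a' i)
    simp only [hudef]; linarith
  have hUx : ∀ m, ∑ i ∈ range m, u i = min S (P m) := by
    intro m
    have := Finset.sum_range_sub (fun m => min S (P m)) m
    simp only [hudef]
    rw [this]
    have : P 0 = 0 := Finset.sum_range_zero _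
    rw [this, min_eq_right hS0, sub_zero]
  have hSsum : ∑ i ∈ range D, u i = S := by rw [hUx D, min_eq_left hSP]
  set x : Fin D → ℝ := fun d => u d.val / a' d.val with hxdef
  have hxmem : x ∈ Set.Icc (0 : Fin D → ℝ) 1 := by
    constructor
    · intro d; exact div_nonneg (hu0 _) (ha'pos _).le
    · intro d; exact (div_le_one (ha'pos _)).2 (hua _)
  have haxu : ∀ d : Fin D, a d * x d = u d.val := by
    intro d
    rw [← ha'eq d, hxdef]
    rw [mul_comm, div_mul_cancel₀ _ (ne_of_gt (ha'pos d.val))]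
  have hsumeq : (∑ d, a d * x d) = (∑ d, a d * y d) := by
    have h1 : (∑ d, a d * x d) = ∑ i ∈ range D, u i := by
      rw [← Fin.sum_univ_eq_sum_range (fun i => u i) D]
      exact Finset.sum_congr rfl fun d _ => haxu d
    have h2 : (∑ d, a d * y d) = S := by
      rw [hSdef, ← Fin.sum_univ_eq_sum_range (fun i => a' i * y' i) D]
      exact Finset.sum_congr rfl fun d _ => by rw [ha'eq d, hy'eq d]
    rw [h1, hSsum, h2]
  -- cost comparison via Abel summation
  set r : ℕ → ℝ := fun i => q' i / a' i with hrdef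
  have hrmono : ∀ i, i + 1 < D → r i ≤ r (i + 1) := by
    intro i h
    have hi : i < D := Nat.lt_of_succ_lt h
    have hs := hsorted ⟨i, hi⟩ ⟨i + 1, h⟩ (by simp [Fin.le_def])
    have hqi := hq ⟨i, hi⟩
    have hqj := hq ⟨i + 1, h⟩
    have hai := ha ⟨i, hi⟩
    have haj := ha ⟨i + 1, h⟩
    rw [div_le_div_iff₀ hqj hqi] at hs
    simp only [hrdef, hq'def, ha'def, dif_pos hi, dif_pos h]
    rw [div_le_div_iff₀ hai haj]
    nlinarith
  have hcostx : (∑ d, q d * x d) = ∑ i ∈ range D, r i * u i := by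
    rw [← Fin.sum_univ_eq_sum_range (fun i => r i * u i) D]
    refine Finset.sum_congr rfl fun d _ => ?_
    rw [← hq'eq d, hxdef, hrdef]
    field_simp
  have hcosty : (∑ d, q d * y d) = ∑ i ∈ range D, r i * (a' i * y' i) := by
    rw [← Fin.sum_univ_eq_sum_range (fun i => r i * (a' i * y' i)) D]
    refine Finset.sum_congr rfl fun d _ => ?_
    rw [← hq'eq d, ← hy'eq d, hrdef]
    field_simp [ne_of_gt (ha'pos d.val)]
  have hB : ∀ m, m ≤ D → (∑ j ∈ range m, a' j * y' j) ≤ min S (P m) := by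
    intro m hm
    refine le_min ?_ ?_
    · exact Finset.sum_le_sum_of_subset_of_nonneg (Finset.range_subset_range.2 hm)
        (fun i _ _ => mul_nonneg (ha'pos i).le (hy'0 i))
    · exact Finset.sum_le_sum fun i _ => mul_le_of_le_one_right (ha'pos i).le (hy'1 i)
  have hcost : (∑ d, q d * x d) ≤ (∑ d, q d * y d) := by
    rw [hcostx, hcosty]
    have hbx := Finset.sum_range_by_parts r u D
    have hby := Finset.sum_range_by_parts r (fun i => a' i * y' i) D
    simp only [smul_eq_mul] at hbx hby
    rw [hbx, hby, hSsum]
    have hSS : (∑ i ∈ range D, a' i * y' i) = S := rfl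
    rw [hSS]
    apply sub_le_sub_left
    apply Finset.sum_le_sum
    intro i hi
    have hi' : i + 1 < D := by
      have := Finset.mem_range.1 hi
      omega
    have h1 : 0 ≤ r (i + 1) - r i := sub_nonneg.2 (hrmono i hi')
    have h2 : (∑ j ∈ range (i + 1), a' j * y' j) ≤ ∑ j ∈ range (i + 1), u j := by
      rw [hUx]
      exact hB (i + 1) (le_of_lt hi')
    exact mul_le_mul_of_nonneg_left h2 h1
  -- prefix structure
  have hkey : ∀ d e : Fin D, d < e → x d < 1 → x e = 0 := by
    intro d e hde hxd
    have hud : u d.val < a' d.val := by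
      have := (div_lt_one (ha'pos d.val)).1 hxd
      exact this
    have hSd : S < P (d.val + 1) := by
      by_contra hcon
      push_neg at hcon
      have h1 : min S (P (d.val + 1)) = P (d.val + 1) := min_eq_right hcon
      have h2 : min S (P d.val) = P d.val :=
        min_eq_right (le_trans (hPmono (Nat.le_succ _)) hcon)
      have : u d.val = a' d.val := by
        show min S (P (d.val + 1)) - min S (P d.val) = a' d.val
        rw [h1, h2, hPsucc d.val]; ring
      linarith
    have hde' : d.val + 1 ≤ e.val := hde
    have h3 : S ≤ P e.val := le_trans hSd.le (hPmono hde')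
    have h4 : S ≤ P (e.val + 1) := le_trans h3 (hPmono (Nat.le_succ _))
    simp only [hxdef, hudef, min_eq_left h3, min_eq_left h4, sub_self, zero_div]
  by_cases hall : ∀ d : Fin D, x d = 1
  · refine ⟨x, hxmem, hsumeq, hcost, ⟨D - 1, by omega⟩, fun d _ => hall d, fun d hd => ?_⟩
    exact absurd hd (by simp [Fin.lt_def]; omega)
  · push_neg at hall
    obtain ⟨d0, hd0⟩ := hall
    have hne : (Finset.univ.filter (fun d => x d ≠ 1)).Nonempty :=
      ⟨d0, by simp [hd0]⟩
    set k := Finset.min' _ hne with hkdef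
    have hkmem : x k ≠ 1 := by
      have := Finset.min'_mem _ hne
      simpa using this
    refine ⟨x, hxmem, hsumeq, hcost, k, ?_, ?_⟩
    · intro d hdk
      by_contra h
      exact absurd (Finset.min'_le _ d (by simp [h])) (not_le.2 hdk)
    · intro d hkd
      exact hkey k d hkd (lt_of_le_of_ne (hxmem.2 k) hkmem)

/-- For a concave, nondecreasing, continuous `g`, positive coefficients `a` and
positive prices `q` sorted so that `a 1 / q 1 ≥ a 2 / q 2 ≥ …`, the quasi-linear objective
`x ↦ g (∑ d, a d * x d) - ∑ d, q d * x d` has a maximizer over the box `[0,1]^D`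
of greedy prefix form. -/
theorem greedy_prefix_maximizer
    (D : ℕ) (hD : 0 < D)
    (a q : Fin D → ℝ)
    (ha : ∀ d, 0 < a d) (hq : ∀ d, 0 < q d)
    (g : ℝ → ℝ)
    (hgconc : ConcaveOn ℝ Set.univ g)
    (hgmono : Monotone g)
    (hgcont : Continuous g)
    (hsorted : ∀ i j : Fin D, i ≤ j → a j / q j ≤ a i / q i) :
    ∃ x ∈ Set.Icc (0 : Fin D → ℝ) 1,
      (∀ y ∈ Set.Icc (0 : Fin D → ℝ) 1,
        g (∑ d, a d * y d) - ∑ d, q d * y d ≤ g (∑ d, a d * x d) - ∑ d, q d * x d) ∧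
      ∃ k : Fin D, (∀ d, d < k → x d = 1) ∧ (∀ d, k < d → x d = 0) := by
  have hcont : Continuous fun z : Fin D → ℝ => g (∑ d, a d * z d) - ∑ d, q d * z d := by
    apply Continuous.sub
    · exact hgcont.comp (continuous_finset_sum _ fun d _ => (continuous_const.mul (continuous_apply d) : Continuous fun z : Fin D → ℝ => a d * z d))
    · exact continuous_finset_sum _ fun d _ => (continuous_const.mul (continuous_apply d) : Continuous fun z : Fin D → ℝ => q d * z d)
  have hne : (Set.Icc (0 : Fin D → ℝ) 1).Nonempty := ⟨0, le_refl _, zero_le_one⟩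
  obtain ⟨y, hy, hymax⟩ := isCompact_Icc.exists_isMaxOn hne hcont.continuousOn
  obtain ⟨x, hx, hsum, hcost, k, hk1, hk2⟩ :=
    greedy_dominates_aux D hD a q ha hq hsorted y hy
  refine ⟨x, hx, ?_, k, hk1, hk2⟩
  intro z hz
  have h1 : g (∑ d, a d * z d) - ∑ d, q d * z d ≤ g (∑ d, a d * y d) - ∑ d, q d * y d :=
    hymax hz
  have h2 : g (∑ d, a d * y d) = g (∑ d, a d * x d) := by rw [hsum]
  linarith
end

section
/- Let D be a positive integer, let a ∈ ℝ^D with a_d > 0, let g : ℝ → ℝ be concave, nondecreasing and continuous, and set u(x) = g(∑_d a_d x_d). Let q, q' ∈ ℝ^D with q_d > 0 for all d, and suppose q' differs from q only in one coordinate e, where q'_e ≥ q_e. Then there exist x ∈ 𝒟(u,q) and x' ∈ 𝒟(u,q') such that x'_i ≥ x_i for every coordinate i ≠ e. -/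
/-- The demand set `𝒟(u, q)`: maximizers of the quasi-linear utility
`x ↦ u x - q·x` over the box `[0,1]^D`. -/
def demandSet {D : ℕ} (u : (Fin D → ℝ) → ℝ) (q : Fin D → ℝ) : Set (Fin D → ℝ) :=
  {x | x ∈ Set.Icc (0 : Fin D → ℝ) 1 ∧
    ∀ y ∈ Set.Icc (0 : Fin D → ℝ) 1,
      u y - ∑ d, q d * y d ≤ u x - ∑ d, q d * x d}

lemma sum_mul_update {D : ℕ} (c h : Fin D → ℝ) (j : Fin D) (v : ℝ) :
    ∑ d, c d * Function.update h j v d = (∑ d, c d * h d) + c j * (v - h j) := by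
  have key : ∀ d : Fin D, c d * Function.update h j v d
      = c d * h d + (if d = j then c j * (v - h j) else 0) := by
    intro d
    rcases eq_or_ne d j with rfl | hd
    · rw [Function.update_self, if_pos rfl]; ring
    · rw [Function.update_of_ne hd, if_neg hd]; ring
  rw [Finset.sum_congr rfl (fun d _ => key d), Finset.sum_add_distrib,
    Finset.sum_ite_eq' Finset.univ j (fun _ => c j * (v - h j))]
  simp

lemma sum_mul_update2 {D : ℕ} (c h : Fin D → ℝ) {j k : Fin D} (hjk : j ≠ k) (vj vk : ℝ) :
    ∑ d, c d * Function.update (Function.update h k vk) j vj d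
      = (∑ d, c d * h d) + c k * (vk - h k) + c j * (vj - h j) := by
  rw [sum_mul_update, sum_mul_update, Function.update_of_ne hjk]

lemma box_update_mem {D : ℕ} {x : Fin D → ℝ} (hx : x ∈ Set.Icc (0 : Fin D → ℝ) 1)
    {j : Fin D} {v : ℝ} (h0 : 0 ≤ v) (h1 : v ≤ 1) :
    Function.update x j v ∈ Set.Icc (0 : Fin D → ℝ) 1 := by
  rw [Set.mem_Icc, Pi.le_def, Pi.le_def] at hx ⊢
  obtain ⟨hx0, hx1⟩ := hx
  refine ⟨fun d => ?_, fun d => ?_⟩ <;> rcases eq_or_ne d j with rfl | hd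
  · simpa using h0
  · simpa [Function.update_of_ne hd] using hx0 d
  · simpa using h1
  · simpa [Function.update_of_ne hd] using hx1 d

lemma exists_demand_max {D : ℕ} (u : (Fin D → ℝ) → ℝ) (hu : Continuous u)
    (q : Fin D → ℝ) (Φ : (Fin D → ℝ) → ℝ) (hΦ : Continuous Φ) :
    ∃ x ∈ demandSet u q, ∀ z ∈ demandSet u q, Φ z ≤ Φ x := by
  have hK : IsCompact (Set.Icc (0 : Fin D → ℝ) 1) := isCompact_Icc
  have hKne : (Set.Icc (0 : Fin D → ℝ) 1).Nonempty := ⟨0, le_refl _, zero_le_one⟩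
  set f : (Fin D → ℝ) → ℝ := fun x => u x - ∑ d, q d * x d with hf
  have hfc : Continuous f :=
    hu.sub (continuous_finset_sum _ fun d _ => continuous_const.mul (continuous_apply d))
  obtain ⟨x₀, hx₀K, hx₀⟩ := hK.exists_isMaxOn hKne hfc.continuousOn
  set K' := Set.Icc (0 : Fin D → ℝ) 1 ∩ f ⁻¹' Set.Ici (f x₀) with hK'
  have hK'c : IsCompact K' := hK.inter_right (isClosed_Ici.preimage hfc)
  have hK'ne : K'.Nonempty := ⟨x₀, hx₀K, Set.mem_preimage.mpr (Set.mem_Ici.mpr le_rfl)⟩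
  obtain ⟨x, hxK', hxmax⟩ := hK'c.exists_isMaxOn hK'ne hΦ.continuousOn
  have hdem : demandSet u q = K' := by
    ext z
    constructor
    · rintro ⟨hz1, hz2⟩; exact ⟨hz1, hz2 x₀ hx₀K⟩
    · rintro ⟨hz1, hz2⟩; exact ⟨hz1, fun y hy => le_trans (hx₀ hy) hz2⟩
  rw [hdem]
  exact ⟨x, hxK', fun z hz => hxmax hz⟩

lemma concave_slope_four {g : ℝ → ℝ} (hg : ConcaveOn ℝ Set.univ g) {p1 p2 p3 p4 : ℝ}
    (h12 : p1 < p2) (h23 : p2 ≤ p3) (h34 : p3 < p4) :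
    (g p4 - g p3) / (p4 - p3) ≤ (g p2 - g p1) / (p2 - p1) := by
  rcases eq_or_lt_of_le h23 with rfl | h
  · exact hg.slope_anti_adjacent (Set.mem_univ _) (Set.mem_univ _) h12 h34
  · calc (g p4 - g p3) / (p4 - p3)
        ≤ (g p3 - g p2) / (p3 - p2) :=
          hg.slope_anti_adjacent (Set.mem_univ _) (Set.mem_univ _) h h34
      _ ≤ (g p2 - g p1) / (p2 - p1) :=
          hg.slope_anti_adjacent (Set.mem_univ _) (Set.mem_univ _) h12 h

/-- for `u x = g (∑ d, a d * x d)` with `g` concave, nondecreasing and continuous,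
if the price vector `q'` differs from `q` only at coordinate `e`, where `q' e ≥ q e`, then
there are demanded bundles `x ∈ 𝒟(u,q)` and `x' ∈ 𝒟(u,q')` with `x' i ≥ x i` for all `i ≠ e`. -/
theorem demand_substitutes_single_price_increase
    (D : ℕ) (hD : 0 < D)
    (a : Fin D → ℝ) (ha : ∀ d, 0 < a d)
    (g : ℝ → ℝ)
    (hgconc : ConcaveOn ℝ Set.univ g)
    (hgmono : Monotone g)
    (hgcont : Continuous g)
    (q q' : Fin D → ℝ)
    (hq : ∀ d, 0 < q d) (hq' : ∀ d, 0 < q' d)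
    (e : Fin D)
    (he : q e ≤ q' e)
    (hdiff : ∀ i, i ≠ e → q' i = q i) :
    ∃ x ∈ demandSet (fun x => g (∑ d, a d * x d)) q,
      ∃ x' ∈ demandSet (fun x => g (∑ d, a d * x d)) q',
        ∀ i, i ≠ e → x i ≤ x' i := by
  classical
  set u : (Fin D → ℝ) → ℝ := fun x => g (∑ d, a d * x d) with hu_def
  have hu : Continuous u :=
    hgcont.comp (continuous_finset_sum _ fun d _ => continuous_const.mul (continuous_apply d))
  obtain ⟨x, hx, -⟩ := exists_demand_max u hu q (fun _ => (0 : ℝ)) continuous_const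
  set w : Fin D → ℝ := fun d => if d = e then 0 else a d with hw_def
  set Φ : (Fin D → ℝ) → ℝ := fun y => ∑ d, w d * min (y d) (x d) with hΦ_def
  have hΦ : Continuous Φ :=
    continuous_finset_sum _ fun d _ => continuous_const.mul ((continuous_apply d).min continuous_const)
  obtain ⟨x', hx', hmax⟩ := exists_demand_max u hu q' Φ hΦ
  refine ⟨x, hx, x', hx', ?_⟩
  intro j hj
  by_contra hcon
  push_neg at hcon
  -- pointwise bounds
  have hx0 : ∀ d, 0 ≤ x d := fun d => hx.1.1 d
  have hx1 : ∀ d, x d ≤ 1 := fun d => hx.1.2 d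
  have hx'0 : ∀ d, 0 ≤ x' d := fun d => hx'.1.1 d
  have hx'1 : ∀ d, x' d ≤ 1 := fun d => hx'.1.2 d
  have haj := ha j
  have hqj : q' j = q j := hdiff j hj
  have hwj : w j = a j := if_neg hj
  -- Φ under update
  have hΦupd : ∀ (z : Fin D → ℝ) (i : Fin D) (v : ℝ),
      Φ (Function.update z i v) = Φ z + w i * (min v (x i) - min (z i) (x i)) := by
    intro z i v
    have hmin : ∀ d, min (Function.update z i v d) (x d)
        = Function.update (fun d => min (z d) (x d)) i (min v (x i)) d := by
      intro d; rcases eq_or_ne d i with rfl | hd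
      · simp
      · simp [Function.update_of_ne hd]
    simp only [hΦ_def]
    rw [Finset.sum_congr rfl fun d _ => by rw [hmin d]]
    rw [sum_mul_update w (fun d => min (z d) (x d)) i (min v (x i))]
  have hdem' : ∀ y, y ∈ Set.Icc (0 : Fin D → ℝ) 1 →
      u x' - ∑ d, q' d * x' d ≤ u y - ∑ d, q' d * y d → y ∈ demandSet u q' :=
    fun y hy hle => ⟨hy, fun z hz => le_trans (hx'.2 z hz) hle⟩
  set S : ℝ := ∑ d, a d * x d with hS
  set S' : ℝ := ∑ d, a d * x' d with hS'
  rcases lt_or_ge S' S with hSS | hSS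
  · -- Case 1 : S' < S
    set δ : ℝ := min (a j * (x j - x' j)) ((S - S') / 2) with hδ_def
    have hδpos : 0 < δ := lt_min (by nlinarith) (by linarith)
    have hδ1 : δ ≤ a j * (x j - x' j) := min_le_left _ _
    have hδ2 : δ ≤ (S - S') / 2 := min_le_right _ _
    have ht : δ / a j ≤ x j - x' j := by
      rw [div_le_iff₀ haj]; nlinarith
    have htpos : 0 < δ / a j := div_pos hδpos haj
    -- P2 at x
    have hP2 : q j * (δ / a j) ≤ g S - g (S - δ) := by
      have hy3 : Function.update x j (x j - δ / a j) ∈ Set.Icc (0 : Fin D → ℝ) 1 :=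
        box_update_mem hx.1 (by linarith [hx'0 j]) (by linarith [hx1 j])
      have hle := hx.2 _ hy3
      have hsa : ∑ d, a d * Function.update x j (x j - δ / a j) d = S - δ := by
        rw [sum_mul_update, ← hS]
        have hh : a j * ((x j - δ / a j) - x j) = -δ := by field_simp; ring
        rw [hh]; ring
      have hsq : ∑ d, q d * Function.update x j (x j - δ / a j) d
          = (∑ d, q d * x d) + q j * ((x j - δ / a j) - x j) := by
        rw [sum_mul_update]
      simp only [hu_def] at hle
      rw [hsa, hsq] at hle
      have : q j * ((x j - δ / a j) - x j) = -(q j * (δ / a j)) := by ring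
      rw [this] at hle
      linarith
    -- concavity transfer
    have hslope : g S - g (S - δ) ≤ g (S' + δ) - g S' := by
      have h4 := concave_slope_four hgconc (show S' < S' + δ by linarith)
        (show S' + δ ≤ S - δ by linarith) (show S - δ < S by linarith)
      rw [show S - (S - δ) = δ by ring, show S' + δ - S' = δ by ring] at h4
      have := mul_le_mul_of_nonneg_right h4 hδpos.le
      rwa [div_mul_cancel₀ _ hδpos.ne', div_mul_cancel₀ _ hδpos.ne'] at this
    -- P1 at x' (with equality)
    have hy4 : Function.update x' j (x' j + δ / a j) ∈ Set.Icc (0 : Fin D → ℝ) 1 :=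
      box_update_mem hx'.1 (by linarith [hx'0 j]) (by linarith [hx1 j])
    have hsa' : ∑ d, a d * Function.update x' j (x' j + δ / a j) d = S' + δ := by
      rw [sum_mul_update, ← hS']
      have : a j * (x' j + δ / a j - x' j) = δ := by field_simp; ring
      rw [this]
    have hsq' : ∑ d, q' d * Function.update x' j (x' j + δ / a j) d
        = (∑ d, q' d * x' d) + q' j * (δ / a j) := by
      rw [sum_mul_update]; ring
    have hP1 : g (S' + δ) - g S' ≤ q j * (δ / a j) := by
      have hle := hx'.2 _ hy4
      simp only [hu_def] at hle
      rw [hsa', hsq', hqj] at hle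
      linarith
    have heq : u x' - ∑ d, q' d * x' d
        ≤ u (Function.update x' j (x' j + δ / a j))
          - ∑ d, q' d * Function.update x' j (x' j + δ / a j) d := by
      simp only [hu_def]
      rw [hsa', hsq', hqj]
      linarith
    have hy4dem := hdem' _ hy4 heq
    have hfin := hmax _ hy4dem
    rw [hΦupd, min_eq_left (by linarith : x' j + δ / a j ≤ x j),
      min_eq_left hcon.le, hwj] at hfin
    have : a j * (x' j + δ / a j - x' j) = δ := by field_simp; ring
    rw [this] at hfin
    linarith
  · -- Case 2 : S ≤ S'
    have hkex : ∃ k, k ≠ j ∧ x k < x' k := by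
      by_contra hno
      push_neg at hno
      have hlt : ∑ d, a d * x' d < ∑ d, a d * x d := by
        refine Finset.sum_lt_sum (fun d _ => ?_) ⟨j, Finset.mem_univ j, ?_⟩
        · rcases eq_or_ne d j with rfl | hd
          · exact mul_le_mul_of_nonneg_left hcon.le (ha d).le
          · exact mul_le_mul_of_nonneg_left (hno d hd) (ha d).le
        · exact mul_lt_mul_of_pos_left hcon (ha j)
      rw [← hS, ← hS'] at hlt
      linarith
    obtain ⟨k, hkj, hklt⟩ := hkex
    have hak := ha k
    set ε : ℝ := min (a k * (x' k - x k)) (a j * (x j - x' j)) with hε_def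
    have hεpos : 0 < ε := lt_min (by nlinarith) (by nlinarith)
    have hε1 : ε / a k ≤ x' k - x k := by rw [div_le_iff₀ hak]; nlinarith [min_le_left (a k * (x' k - x k)) (a j * (x j - x' j))]
    have hε2 : ε / a j ≤ x j - x' j := by rw [div_le_iff₀ haj]; nlinarith [min_le_right (a k * (x' k - x k)) (a j * (x j - x' j))]
    have hεk : 0 < ε / a k := div_pos hεpos hak
    have hεj : 0 < ε / a j := div_pos hεpos haj
    have hjk : j ≠ k := Ne.symm hkj
    -- y₁ : perturbation of x (k up, j down)
    have hy1 : Function.update (Function.update x k (x k + ε / a k)) j (x j - ε / a j)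
        ∈ Set.Icc (0 : Fin D → ℝ) 1 := by
      refine box_update_mem (box_update_mem hx.1 ?_ ?_) ?_ ?_
      · linarith [hx0 k]
      · linarith [hx'1 k]
      · linarith [hx'0 j]
      · linarith [hx1 j]
    have hA : q j * (ε / a j) ≤ q k * (ε / a k) := by
      have hle := hx.2 _ hy1
      have hsa : ∑ d, a d * Function.update (Function.update x k (x k + ε / a k)) j (x j - ε / a j) d = S := by
        rw [sum_mul_update2 a x hjk, ← hS]
        have e1 : a k * (x k + ε / a k - x k) = ε := by field_simp; ring
        have e2 : a j * (x j - ε / a j - x j) = -ε := by field_simp; ring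
        rw [e1, e2]; ring
      have hsq : ∑ d, q d * Function.update (Function.update x k (x k + ε / a k)) j (x j - ε / a j) d
          = (∑ d, q d * x d) + q k * (ε / a k) - q j * (ε / a j) := by
        rw [sum_mul_update2 q x hjk]; ring
      simp only [hu_def] at hle
      rw [hsa, hsq] at hle
      linarith
    -- y₂ : perturbation of x' (j up, k down)
    have hy2mem : Function.update (Function.update x' k (x' k - ε / a k)) j (x' j + ε / a j)
        ∈ Set.Icc (0 : Fin D → ℝ) 1 := by
      refine box_update_mem (box_update_mem hx'.1 ?_ ?_) ?_ ?_
      · linarith [hx0 k]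
      · linarith [hx'1 k]
      · linarith [hx'0 j]
      · linarith [hx1 j]
    have hsa2 : ∑ d, a d * Function.update (Function.update x' k (x' k - ε / a k)) j (x' j + ε / a j) d = S' := by
      rw [sum_mul_update2 a x' hjk, ← hS']
      have e1 : a k * (x' k - ε / a k - x' k) = -ε := by field_simp; ring
      have e2 : a j * (x' j + ε / a j - x' j) = ε := by field_simp; ring
      rw [e1, e2]; ring
    have hsq2 : ∑ d, q' d * Function.update (Function.update x' k (x' k - ε / a k)) j (x' j + ε / a j) d
        = (∑ d, q' d * x' d) - q' k * (ε / a k) + q' j * (ε / a j) := by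
      rw [sum_mul_update2 q' x' hjk]; ring
    have hB : q' k * (ε / a k) ≤ q' j * (ε / a j) := by
      have hle := hx'.2 _ hy2mem
      simp only [hu_def] at hle
      rw [hsa2, hsq2] at hle
      linarith
    have hqk : q k ≤ q' k := by
      rcases eq_or_ne k e with rfl | hke
      · exact he
      · exact (hdiff k hke).ge
    have hCeq : q' k * (ε / a k) = q' j * (ε / a j) := by
      refine le_antisymm hB ?_
      have h1 : q' j * (ε / a j) = q j * (ε / a j) := by rw [hqj]
      have h2 : q k * (ε / a k) ≤ q' k * (ε / a k) :=
        mul_le_mul_of_nonneg_right hqk hεk.le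
      linarith
    have heq2 : u x' - ∑ d, q' d * x' d
        ≤ u (Function.update (Function.update x' k (x' k - ε / a k)) j (x' j + ε / a j))
          - ∑ d, q' d * Function.update (Function.update x' k (x' k - ε / a k)) j (x' j + ε / a j) d := by
      simp only [hu_def]
      rw [hsa2, hsq2]
      linarith
    have hy2dem := hdem' _ hy2mem heq2
    have hfin := hmax _ hy2dem
    rw [hΦupd, hΦupd] at hfin
    rw [Function.update_of_ne hjk] at hfin
    rw [min_eq_right (by linarith : x k ≤ x' k - ε / a k),
      min_eq_right hklt.le,
      min_eq_left (by linarith : x' j + ε / a j ≤ x j),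
      min_eq_left hcon.le, hwj] at hfin
    have : a j * (x' j + ε / a j - x' j) = ε := by field_simp; ring
    rw [this] at hfin
    have hwk0 : w k * (x k - x k) = 0 := by ring
    rw [hwk0] at hfin
    linarith
end

section
/- Let D be a positive integer, let a ∈ ℝ^D with a_d > 0, let g : ℝ → ℝ be concave, nondecreasing and continuous, and set u(x) = g(∑_d a_d x_d). Let q ∈ ℝ^D with q_d > 0 for all d and let λ ≥ 1. Then for every y ∈ 𝒟(u, q) there exists y' ∈ 𝒟(u, λq) with y' ≤ y componentwise. -/
lemma sum_lin_comb {D : ℕ} (c1 c2 : ℝ) (f h : Fin D → ℝ) :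
    ∑ d, (c1 * f d + c2 * h d) = c1 * ∑ d, f d + c2 * ∑ d, h d := by
  rw [Finset.sum_add_distrib, ← Finset.mul_sum, ← Finset.mul_sum]

/-- for `u x = g (∑ d, a d * x d)` with `g` concave, nondecreasing and continuous,
scaling the whole price vector up by a factor `λ ≥ 1` can only shrink demand: for every
`y ∈ 𝒟(u, q)` there is `y' ∈ 𝒟(u, λ q)` with `y' ≤ y` componentwise. -/
theorem demand_decreases_under_uniform_price_scaling
    (D : ℕ) (hD : 0 < D)
    (a : Fin D → ℝ) (ha : ∀ d, 0 < a d)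
    (g : ℝ → ℝ)
    (hgconc : ConcaveOn ℝ Set.univ g)
    (hgmono : Monotone g)
    (hgcont : Continuous g)
    (q : Fin D → ℝ) (hq : ∀ d, 0 < q d)
    (lam : ℝ) (hlam : 1 ≤ lam) :
    ∀ y ∈ demandSet (fun x => g (∑ d, a d * x d)) q,
      ∃ y' ∈ demandSet (fun x => g (∑ d, a d * x d)) (fun d => lam * q d),
        y' ≤ y := by
  intro y hy
  obtain ⟨hyIcc, hyopt⟩ := hy
  have hlam0 : (0:ℝ) < lam := lt_of_lt_of_le one_pos hlam
  -- a maximizer z for the scaled prices exists by compactness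
  have hcomp : IsCompact (Set.Icc (0 : Fin D → ℝ) 1) := isCompact_Icc
  have hne : (Set.Icc (0 : Fin D → ℝ) 1).Nonempty :=
    ⟨0, Set.mem_Icc.2 ⟨le_refl _, fun d => zero_le_one⟩⟩
  have hcont : Continuous (fun x : Fin D → ℝ =>
      g (∑ d, a d * x d) - ∑ d, lam * q d * x d) := by
    apply Continuous.sub
    · exact hgcont.comp (continuous_finset_sum _ fun d _ =>
        (continuous_const.mul (continuous_apply d)))
    · exact continuous_finset_sum _ fun d _ => (continuous_const.mul (continuous_apply d))
  obtain ⟨z, hzIcc, hzmax⟩ := hcomp.exists_isMaxOn hne hcont.continuousOn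
  -- notation for the levels
  set Tz := ∑ d, a d * z d with hTz
  set Ty := ∑ d, a d * y d with hTy
  -- scaled price sums factor
  have hlamsum : ∀ x : Fin D → ℝ, (∑ d, lam * q d * x d) = lam * ∑ d, q d * x d := by
    intro x
    rw [Finset.mul_sum]
    exact Finset.sum_congr rfl fun d _ => by ring
  have hTy0 : 0 ≤ Ty :=
    Finset.sum_nonneg fun d _ => mul_nonneg (ha d).le (hyIcc.1 d)
  rcases le_or_gt Tz Ty with hle | hlt
  · -- Case 1 : Tz ≤ Ty : exchange construction
    set m : Fin D → ℝ := fun d => min (z d) (y d) with hm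
    set M : Fin D → ℝ := fun d => max (z d) (y d) with hM
    have hid_a : (∑ d, a d * M d) + (∑ d, a d * m d) = Tz + Ty := by
      rw [← Finset.sum_add_distrib, hTz, hTy, ← Finset.sum_add_distrib]
      refine Finset.sum_congr rfl fun d _ => ?_
      simp only [hM, hm]
      rw [← mul_add, ← mul_add, max_add_min]
    have hid_q : (∑ d, q d * M d) + (∑ d, q d * m d)
        = (∑ d, q d * z d) + (∑ d, q d * y d) := by
      rw [← Finset.sum_add_distrib, ← Finset.sum_add_distrib]
      refine Finset.sum_congr rfl fun d _ => ?_
      simp only [hM, hm]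
      rw [← mul_add, ← mul_add, max_add_min]
    have hm_le_z : ∀ d, m d ≤ z d := fun d => min_le_left _ _
    have hm_le_y : ∀ d, m d ≤ y d := fun d => min_le_right _ _
    have hm_nonneg : ∀ d, 0 ≤ m d := fun d => le_min (hzIcc.1 d) (hyIcc.1 d)
    have hsum_m_le_z : (∑ d, a d * m d) ≤ Tz :=
      Finset.sum_le_sum fun d _ => mul_le_mul_of_nonneg_left (hm_le_z d) (ha d).le
    have hsum_m_le_y : (∑ d, a d * m d) ≤ Ty :=
      Finset.sum_le_sum fun d _ => mul_le_mul_of_nonneg_left (hm_le_y d) (ha d).le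
    set s : ℝ := Tz - ∑ d, a d * m d with hs
    have hs0 : 0 ≤ s := by simp only [hs]; linarith
    set denom : ℝ := Ty - ∑ d, a d * m d with hdenom
    have hdenom0 : 0 ≤ denom := by simp only [hdenom]; linarith
    have hs_le_denom : s ≤ denom := by simp only [hs, hdenom]; linarith
    set θ : ℝ := s / denom with hθ
    have hθ0 : 0 ≤ θ := div_nonneg hs0 hdenom0
    have hθ1 : θ ≤ 1 := by
      rcases eq_or_lt_of_le hdenom0 with h0 | h0
      · simp only [hθ, ← h0, div_zero]; norm_num
      · rw [hθ, div_le_one h0]; exact hs_le_denom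
    have hθd : θ * denom = s := by
      rcases eq_or_lt_of_le hdenom0 with h0 | h0
      · have hs00 : s = 0 := le_antisymm (by rw [← h0] at hs_le_denom; exact hs_le_denom) hs0
        rw [← h0, mul_zero, hs00]
      · rw [hθ, div_mul_cancel₀ _ (ne_of_gt h0)]
    set w : Fin D → ℝ := fun d => (1 - θ) * m d + θ * y d with hw
    set v : Fin D → ℝ := fun d => (1 - θ) * M d + θ * z d with hv
    have hwIcc : w ∈ Set.Icc (0 : Fin D → ℝ) 1 := by
      constructor
      · intro d
        exact add_nonneg (mul_nonneg (by linarith) (hm_nonneg d))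
          (mul_nonneg hθ0 (hyIcc.1 d))
      · intro d
        have h1 : m d ≤ 1 := le_trans (hm_le_z d) (hzIcc.2 d)
        have h2 : y d ≤ 1 := hyIcc.2 d
        show (1 - θ) * m d + θ * y d ≤ 1
        nlinarith [mul_le_mul_of_nonneg_left h1 (by linarith : (0:ℝ) ≤ 1 - θ),
          mul_le_mul_of_nonneg_left h2 hθ0]
    have hvIcc : v ∈ Set.Icc (0 : Fin D → ℝ) 1 := by
      constructor
      · intro d
        exact add_nonneg (mul_nonneg (by linarith) (le_trans (hzIcc.1 d) (le_max_left _ _)))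
          (mul_nonneg hθ0 (hzIcc.1 d))
      · intro d
        have h1 : M d ≤ 1 := max_le (hzIcc.2 d) (hyIcc.2 d)
        have h2 : z d ≤ 1 := hzIcc.2 d
        show (1 - θ) * M d + θ * z d ≤ 1
        nlinarith [mul_le_mul_of_nonneg_left h1 (by linarith : (0:ℝ) ≤ 1 - θ),
          mul_le_mul_of_nonneg_left h2 hθ0]
    have hw_le_y : w ≤ y := by
      intro d
      have h1 := hm_le_y d
      show (1 - θ) * m d + θ * y d ≤ y d
      nlinarith [mul_le_mul_of_nonneg_left h1 (by linarith : (0:ℝ) ≤ 1 - θ)]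
    -- level computations
    have hsum_aw : (∑ d, a d * w d) = Tz := by
      have : (∑ d, a d * w d)
          = (1 - θ) * (∑ d, a d * m d) + θ * (∑ d, a d * y d) := by
        rw [← sum_lin_comb]
        exact Finset.sum_congr rfl fun d _ => by simp only [hw]; ring
      rw [this, ← hTy]
      have h2 : θ * denom = s := hθd
      simp only [hdenom, hs] at h2
      linear_combination h2
    have hsum_av : (∑ d, a d * v d) = Ty := by
      have h1 : (∑ d, a d * v d)
          = (1 - θ) * (∑ d, a d * M d) + θ * (∑ d, a d * z d) := by
        rw [← sum_lin_comb]
        exact Finset.sum_congr rfl fun d _ => by simp only [hv]; ring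
      rw [h1, ← hTz]
      have h2 : θ * denom = s := hθd
      simp only [hdenom, hs] at h2
      have h3 : (∑ d, a d * M d) = Tz + Ty - ∑ d, a d * m d := by linarith
      rw [h3]
      linear_combination -h2
    have hsum_qwv : (∑ d, q d * w d) + (∑ d, q d * v d)
        = (∑ d, q d * z d) + (∑ d, q d * y d) := by
      have h1 : (∑ d, q d * w d)
          = (1 - θ) * (∑ d, q d * m d) + θ * (∑ d, q d * y d) := by
        rw [← sum_lin_comb]
        exact Finset.sum_congr rfl fun d _ => by simp only [hw]; ring
      have h2 : (∑ d, q d * v d)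
          = (1 - θ) * (∑ d, q d * M d) + θ * (∑ d, q d * z d) := by
        rw [← sum_lin_comb]
        exact Finset.sum_congr rfl fun d _ => by simp only [hv]; ring
      rw [h1, h2]
      linear_combination (1 - θ) * hid_q
    -- y's optimality at v gives q·v ≥ q·y
    have hqv : (∑ d, q d * y d) ≤ ∑ d, q d * v d := by
      have := hyopt v hvIcc
      simp only [hsum_av, ← hTy] at this
      linarith
    have hqw : (∑ d, q d * w d) ≤ ∑ d, q d * z d := by linarith
    -- w is optimal for the scaled prices
    refine ⟨w, ⟨hwIcc, ?_⟩, hw_le_y⟩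
    intro x hx
    have hx' := hzmax hx
    simp only [Set.mem_setOf_eq] at hx'
    simp only [hsum_aw, ← hTz, hlamsum]
    simp only [hlamsum] at hx'
    nlinarith [hx', mul_le_mul_of_nonneg_left hqw hlam0.le]
  · -- Case 2 : Ty < Tz : y itself remains optimal
    have hTzpos : 0 < Tz := lt_of_le_of_lt hTy0 hlt
    set r : ℝ := Ty / Tz with hr
    have hr0 : 0 ≤ r := div_nonneg hTy0 hTzpos.le
    have hr1 : r ≤ 1 := by rw [hr, div_le_one hTzpos]; exact hlt.le
    set z'' : Fin D → ℝ := fun d => r * z d with hz''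
    have hz''Icc : z'' ∈ Set.Icc (0 : Fin D → ℝ) 1 := by
      constructor
      · intro d; exact mul_nonneg hr0 (hzIcc.1 d)
      · intro d
        calc r * z d ≤ 1 * z d :=
              mul_le_mul_of_nonneg_right hr1 (hzIcc.1 d)
          _ = z d := one_mul _
          _ ≤ 1 := hzIcc.2 d
    have hsum_az'' : (∑ d, a d * z'' d) = Ty := by
      have h1 : (∑ d, a d * z'' d) = r * ∑ d, a d * z d := by
        rw [Finset.mul_sum]
        exact Finset.sum_congr rfl fun d _ => by simp only [hz'']; ring
      rw [h1, ← hTz, hr, div_mul_cancel₀ _ (ne_of_gt hTzpos)]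
    have hsum_qz'' : (∑ d, q d * z'' d) = r * ∑ d, q d * z d := by
      rw [Finset.mul_sum]
      exact Finset.sum_congr rfl fun d _ => by simp only [hz'']; ring
    have hqz_nonneg : 0 ≤ ∑ d, q d * z d :=
      Finset.sum_nonneg fun d _ => mul_nonneg (hq d).le (hzIcc.1 d)
    -- y's optimality at z'' gives q·y ≤ q·z'' ≤ q·z
    have hqyz : (∑ d, q d * y d) ≤ ∑ d, q d * z d := by
      have h1 := hyopt z'' hz''Icc
      simp only [hsum_az'', ← hTy] at h1
      have h2 : (∑ d, q d * z'' d) ≤ ∑ d, q d * z d := by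
        rw [hsum_qz'']
        calc r * ∑ d, q d * z d ≤ 1 * ∑ d, q d * z d :=
              mul_le_mul_of_nonneg_right hr1 hqz_nonneg
          _ = _ := one_mul _
      linarith
    -- y beats z for the scaled prices
    have hyz : g (∑ d, a d * z d) - lam * ∑ d, q d * z d
        ≤ g (∑ d, a d * y d) - lam * ∑ d, q d * y d := by
      have h1 : g (∑ d, a d * z d) - ∑ d, q d * z d
          ≤ g (∑ d, a d * y d) - ∑ d, q d * y d := hyopt z hzIcc
      linarith [h1, mul_nonneg (by linarith : (0:ℝ) ≤ lam - 1)
        (by linarith : (0:ℝ) ≤ (∑ d, q d * z d) - ∑ d, q d * y d)]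
    refine ⟨y, ⟨hyIcc, ?_⟩, le_refl y⟩
    intro x hx
    have hx' := hzmax hx
    simp only [Set.mem_setOf_eq] at hx'
    simp only [hlamsum] at hx' ⊢
    linarith [hx', hyz]
end

section
/- Let D be a positive integer, let a ∈ ℝ^D with a_d > 0, let g : ℝ → ℝ be concave, nondecreasing and continuous, and set u(x) = g(∑_d a_d x_d). Let q, q' ∈ ℝ^D with 0 < q_d ≤ q'_d for all d. Then for every y ∈ 𝒟(u, q) there exists y' ∈ 𝒟(u, q') with u(y') ≤ u(y). -/
/-- for `u x = g (∑ d, a d * x d)` with `g` concave, nondecreasing and continuous,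
increasing the price vector coordinatewise can only decrease the attained utility: for every
`y ∈ 𝒟(u, q)` there is `y' ∈ 𝒟(u, q')` with `u y' ≤ u y`, whenever `0 < q ≤ q'`. -/
theorem demand_utility_decreases_under_price_increase
    (D : ℕ) (hD : 0 < D)
    (a : Fin D → ℝ) (ha : ∀ d, 0 < a d)
    (g : ℝ → ℝ)
    (hgconc : ConcaveOn ℝ Set.univ g)
    (hgmono : Monotone g)
    (hgcont : Continuous g)
    (q q' : Fin D → ℝ)
    (hq : ∀ d, 0 < q d) (hqq' : ∀ d, q d ≤ q' d) :
    ∀ y ∈ demandSet (fun x => g (∑ d, a d * x d)) q,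
      ∃ y' ∈ demandSet (fun x => g (∑ d, a d * x d)) q',
        g (∑ d, a d * y' d) ≤ g (∑ d, a d * y d) := by
  intro y hy
  obtain ⟨hybox, hyopt⟩ := hy
  have hsumcont : Continuous fun x : Fin D → ℝ => ∑ d, a d * x d :=
    continuous_finset_sum _ fun d _ => continuous_const.mul (continuous_apply d)
  have hcont : Continuous fun x : Fin D → ℝ =>
      g (∑ d, a d * x d) - ∑ d, q' d * x d :=
    (hgcont.comp hsumcont).sub
      (continuous_finset_sum _ fun d _ => continuous_const.mul (continuous_apply d))
  have hne : (Set.Icc (0 : Fin D → ℝ) 1).Nonempty := ⟨0, le_rfl, zero_le_one⟩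
  obtain ⟨y', hy'box, hy'max⟩ := isCompact_Icc.exists_isMaxOn hne hcont.continuousOn
  have hy0 : ∀ d, (0:ℝ) ≤ y d := fun d => hybox.1 d
  have hy1 : ∀ d, y d ≤ 1 := fun d => hybox.2 d
  have hy'0 : ∀ d, (0:ℝ) ≤ y' d := fun d => hy'box.1 d
  have hy'1 : ∀ d, y' d ≤ 1 := fun d => hy'box.2 d
  by_cases hss : ∑ d, a d * y' d ≤ ∑ d, a d * y d
  · exact ⟨y', ⟨hy'box, fun x hx => hy'max hx⟩, hgmono hss⟩
  push_neg at hss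
  -- lower barrier L
  set L : Fin D → ℝ := fun d => max 0 (y d + y' d - 1) with hLdef
  have hL0 : ∀ d, 0 ≤ L d := fun d => le_max_left _ _
  have hLy : ∀ d, L d ≤ y d := fun d => max_le (hy0 d) (by linarith [hy'1 d])
  have hLy' : ∀ d, L d ≤ y' d := fun d => max_le (hy'0 d) (by linarith [hy1 d])
  -- intermediate value theorem to find w with a·w = a·y
  have hφ : Continuous fun t : ℝ => ∑ d, a d * (L d + t * (y' d - L d)) := by
    apply continuous_finset_sum
    intro d _
    exact continuous_const.mul (continuous_const.add (continuous_id.mul continuous_const))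
  have hsub := intermediate_value_Icc (zero_le_one (α := ℝ)) hφ.continuousOn
  have hmem : (∑ d, a d * y d) ∈
      Set.Icc (∑ d, a d * (L d + (0:ℝ) * (y' d - L d)))
        (∑ d, a d * (L d + (1:ℝ) * (y' d - L d))) := by
    constructor
    · simp only [zero_mul, add_zero]
      exact Finset.sum_le_sum fun d _ => mul_le_mul_of_nonneg_left (hLy d) (ha d).le
    · simp only [one_mul]
      refine le_of_lt (lt_of_lt_of_le hss (le_of_eq ?_))
      apply Finset.sum_congr rfl
      intro d _
      ring
  obtain ⟨t, ht01, htw⟩ := hsub hmem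
  set w : Fin D → ℝ := fun d => L d + t * (y' d - L d) with hwdef
  have haw : ∑ d, a d * w d = ∑ d, a d * y d := htw
  have hwL : ∀ d, L d ≤ w d := by
    intro d
    show L d ≤ L d + t * (y' d - L d)
    have h := mul_nonneg ht01.1 (by linarith [hLy' d] : (0:ℝ) ≤ y' d - L d)
    linarith
  have hwy' : ∀ d, w d ≤ y' d := by
    intro d
    show L d + t * (y' d - L d) ≤ y' d
    have h := mul_nonneg (by linarith [ht01.2] : (0:ℝ) ≤ 1 - t)
      (by linarith [hLy' d] : (0:ℝ) ≤ y' d - L d)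
    nlinarith
  have hwbox : w ∈ Set.Icc (0 : Fin D → ℝ) 1 :=
    ⟨fun d => (hL0 d).trans (hwL d), fun d => (hwy' d).trans (hy'1 d)⟩
  set z : Fin D → ℝ := fun d => y d + y' d - w d with hzdef
  have hzbox : z ∈ Set.Icc (0 : Fin D → ℝ) 1 := by
    constructor
    · intro d
      have := hwy' d
      have := hy0 d
      simp only [hzdef, Pi.zero_apply]
      linarith
    · intro d
      have h1 := hwL d
      have h2 : y d + y' d - 1 ≤ L d := le_max_right _ _
      simp only [hzdef, Pi.one_apply]
      linarith
  have haz : ∑ d, a d * z d = ∑ d, a d * y' d := by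
    have : ∑ d, a d * z d = ∑ d, (a d * y d + a d * y' d - a d * w d) :=
      Finset.sum_congr rfl fun d _ => by simp only [hzdef]; ring
    rw [this, Finset.sum_sub_distrib, Finset.sum_add_distrib]
    linarith [haw]
  -- optimality inequalities
  have h1 := hyopt z hzbox
  have h2 : g (∑ d, a d * w d) - ∑ d, q' d * w d
      ≤ g (∑ d, a d * y' d) - ∑ d, q' d * y' d := hy'max hwbox
  simp only [haz] at h1
  simp only [haw] at h2
  -- sum identities
  have hqz : ∑ d, q d * z d = ∑ d, q d * y d + ∑ d, q d * y' d - ∑ d, q d * w d := by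
    have : ∑ d, q d * z d = ∑ d, (q d * y d + q d * y' d - q d * w d) :=
      Finset.sum_congr rfl fun d _ => by simp only [hzdef]; ring
    rw [this, Finset.sum_sub_distrib, Finset.sum_add_distrib]
  have hkey : ∑ d, q d * y' d - ∑ d, q d * w d ≤ ∑ d, q' d * y' d - ∑ d, q' d * w d := by
    rw [← Finset.sum_sub_distrib, ← Finset.sum_sub_distrib]
    apply Finset.sum_le_sum
    intro d _
    have h3 : q d * y' d - q d * w d = q d * (y' d - w d) := by ring
    have h4 : q' d * y' d - q' d * w d = q' d * (y' d - w d) := by ring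
    rw [h3, h4]
    exact mul_le_mul_of_nonneg_right (hqq' d) (by linarith [hwy' d])
  -- equality: w is a maximizer for q'
  have heq : g (∑ d, a d * y d) - ∑ d, q' d * w d
      = g (∑ d, a d * y' d) - ∑ d, q' d * y' d := by
    linarith [h1, h2, hkey, hqz]
  refine ⟨w, ⟨hwbox, fun x hx => ?_⟩, ?_⟩
  · have hxle : g (∑ d, a d * x d) - ∑ d, q' d * x d
        ≤ g (∑ d, a d * y' d) - ∑ d, q' d * y' d := hy'max hx
    simp only [haw]
    linarith [heq, hxle]
  · simp only [haw]
    exact le_rfl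
end

section
/- Let π : ℝ≥0^n → ℝ be submodular, i.e., π(q) + π(b) ≥ π(q ⊔ b) + π(q ⊓ b) for all q, b ∈ ℝ≥0^n. Define w(x) := inf_{q ∈ ℝ≥0^n} (π(q) − q·x) for x ∈ ℝ≥0^n, and suppose this infimum is attained for every x ∈ ℝ≥0^n. Then w is submodular on ℝ≥0^n: w(x) + w(y) ≥ w(x ⊔ y) + w(x ⊓ y) for all x, y ∈ ℝ≥0^n. -/
lemma rearrange_aux (q b x y : ℝ) :
    q * x + b * y ≤ max q b * max x y + min q b * min x y := by
  rcases le_total q b with h1 | h1 <;> rcases le_total x y with h2 | h2 <;>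
    simp [max_eq_left, max_eq_right, min_eq_left, min_eq_right, h1, h2] <;> nlinarith

/-- if `π` is submodular on the nonnegative orthant and
`w x = inf_{q ≥ 0} (π q - q·x)` is attained for every `x ≥ 0`, then `w` is submodular
on the nonnegative orthant. -/
theorem legendre_type_transform_submodular
    (n : ℕ) (π : (Fin n → ℝ) → ℝ)
    (hπ : ∀ q b : Fin n → ℝ, 0 ≤ q → 0 ≤ b →
      π (q ⊔ b) + π (q ⊓ b) ≤ π q + π b)
    (w : (Fin n → ℝ) → ℝ)
    (hlb : ∀ x : Fin n → ℝ, 0 ≤ x → ∀ q : Fin n → ℝ, 0 ≤ q →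
      w x ≤ π q - ∑ i, q i * x i)
    (hatt : ∀ x : Fin n → ℝ, 0 ≤ x → ∃ q : Fin n → ℝ, 0 ≤ q ∧
      π q - ∑ i, q i * x i = w x) :
    ∀ x y : Fin n → ℝ, 0 ≤ x → 0 ≤ y →
      w (x ⊔ y) + w (x ⊓ y) ≤ w x + w y := by
  intro x y hx hy
  obtain ⟨q, hq, hqx⟩ := hatt x hx
  obtain ⟨b, hb, hby⟩ := hatt y hy
  have hxy : (0 : Fin n → ℝ) ≤ x ⊔ y := le_sup_of_le_left hx
  have hxy' : (0 : Fin n → ℝ) ≤ x ⊓ y := le_inf hx hy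
  have hqb : (0 : Fin n → ℝ) ≤ q ⊔ b := le_sup_of_le_left hq
  have hqb' : (0 : Fin n → ℝ) ≤ q ⊓ b := le_inf hq hb
  have h1 := hlb (x ⊔ y) hxy (q ⊔ b) hqb
  have h2 := hlb (x ⊓ y) hxy' (q ⊓ b) hqb'
  have hsub := hπ q b hq hb
  have hsum : ∑ i, q i * x i + ∑ i, b i * y i ≤
      ∑ i, (q ⊔ b) i * (x ⊔ y) i + ∑ i, (q ⊓ b) i * (x ⊓ y) i := by
    rw [← Finset.sum_add_distrib, ← Finset.sum_add_distrib]
    exact Finset.sum_le_sum fun i _ => rearrange_aux (q i) (b i) (x i) (y i)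
  linarith
end

section
/- Let v be a real-valued function on subsets of {1,…,n} and let v^+ be its concave closure. Then for every x ∈ [0,1]^n with all coordinates rational, there exists a positive integer k with k·x ∈ ℤ^n and subsets S_1, …, S_k of {1,…,n} with ∑_{i=1}^k 1_{S_i} = k·x (as vectors) such that v^+(x) = (1/k) ∑_{i=1}^k v(S_i); moreover, for every positive integer k and every tuple (S_1,…,S_k) of subsets with ∑_{i=1}^k 1_{S_i} = k·x, one has (1/k) ∑_{i=1}^k v(S_i) ≤ v^+(x). -/
open Finset

section Aux

variable {n : ℕ}

/-- The feasible set of convex-combination weights representing `x`. -/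
def Feas (x : Fin n → ℝ) : Set (Finset (Fin n) → ℝ) :=
  {lam | (∀ S, 0 ≤ lam S) ∧ (∑ S, lam S = 1) ∧
    (∀ i, (∑ S, lam S * (if i ∈ S then 1 else 0)) = x i)}

/-- The objective value of a weight vector. -/
noncomputable def sval (v : Finset (Fin n) → ℝ) (lam : Finset (Fin n) → ℝ) : ℝ :=
  ∑ S, lam S * v S

lemma exists_qlinear (t : ℝ) (ht : ∀ r : ℚ, t ≠ (r:ℝ)) :
    ∃ f : ℝ →ₗ[ℚ] ℝ, f 1 = 1 ∧ f t ≠ t := by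
  have li : LinearIndependent ℚ ![(1:ℝ), t] := by
    rw [LinearIndependent.pair_iff]
    intro s u h
    have h' : (s:ℝ) + (u:ℝ) * t = 0 := by
      simpa [Rat.smul_def] using h
    rcases eq_or_ne u 0 with hu | hu
    · subst hu
      simp at h'
      exact ⟨by exact_mod_cast h', rfl⟩
    · exfalso
      apply ht (-s/u)
      have hu' : (u:ℝ) ≠ 0 := by exact_mod_cast hu
      push_cast
      rw [eq_div_iff hu']
      linarith
  let B := Module.Basis.span li
  let g : Submodule.span ℚ (Set.range ![(1:ℝ), t]) →ₗ[ℚ] ℝ := B.constr ℚ ![(1:ℝ), t+1]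
  obtain ⟨f, hf⟩ := g.exists_extend
  have key : ∀ j : Fin 2, f (B j : ℝ) = g (B j) := by
    intro j
    have := congrFun (congrArg DFunLike.coe hf) (B j)
    simpa using this
  refine ⟨f, ?_, ?_⟩
  · have h0 := key 0
    have hB0 : (B 0 : ℝ) = 1 := by simp [B, Module.Basis.span_apply]
    have hg0 : g (B 0) = 1 := by simp [g, Module.Basis.constr_basis]
    rw [hB0, hg0] at h0; exact h0
  · have h1 := key 1
    have hB1 : (B 1 : ℝ) = t := by simp [B, Module.Basis.span_apply]
    have hg1 : g (B 1) = t + 1 := by simp [g, Module.Basis.constr_basis]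
    rw [hB1, hg1] at h1
    rw [h1]; intro h; linarith

lemma feas_isClosed (x : Fin n → ℝ) : IsClosed (Feas x) := by
  have h1 : IsClosed {lam : Finset (Fin n) → ℝ | ∀ S, 0 ≤ lam S} := by
    have : {lam : Finset (Fin n) → ℝ | ∀ S, 0 ≤ lam S} = ⋂ S, {lam | 0 ≤ lam S} := by
      ext lam; simp [Set.mem_iInter]
    rw [this]
    exact isClosed_iInter fun S => isClosed_le continuous_const (continuous_apply S)
  have h2 : IsClosed {lam : Finset (Fin n) → ℝ | ∑ S, lam S = 1} :=
    isClosed_eq (continuous_finset_sum _ fun S _ => continuous_apply S) continuous_const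
  have h3 : IsClosed {lam : Finset (Fin n) → ℝ |
      ∀ i, (∑ S, lam S * (if i ∈ S then 1 else 0)) = x i} := by
    have : {lam : Finset (Fin n) → ℝ | ∀ i, (∑ S, lam S * (if i ∈ S then 1 else 0)) = x i}
        = ⋂ i, {lam | (∑ S, lam S * (if i ∈ S then 1 else 0)) = x i} := by
      ext lam; simp [Set.mem_iInter]
    rw [this]
    exact isClosed_iInter fun i => isClosed_eq
      (continuous_finset_sum _ fun S _ => (continuous_apply S).mul continuous_const)
      continuous_const
  have : Feas x = {lam : Finset (Fin n) → ℝ | ∀ S, 0 ≤ lam S} ∩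
      ({lam | ∑ S, lam S = 1} ∩
       {lam | ∀ i, (∑ S, lam S * (if i ∈ S then 1 else 0)) = x i}) := rfl
  rw [this]
  exact h1.inter (h2.inter h3)

lemma feas_compact (x : Fin n → ℝ) : IsCompact (Feas x) := by
  apply IsCompact.of_isClosed_subset
    (isCompact_Icc (a := (0 : Finset (Fin n) → ℝ)) (b := 1)) (feas_isClosed x)
  rintro lam ⟨h1, h2, h3⟩
  refine Set.mem_Icc.2 ⟨fun S => h1 S, fun S => ?_⟩
  calc lam S ≤ ∑ T, lam T := Finset.single_le_sum (fun T _ => h1 T) (mem_univ S)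
    _ = 1 := h2

lemma sval_continuous (v : Finset (Fin n) → ℝ) : Continuous (sval v) :=
  continuous_finset_sum _ fun S _ => (continuous_apply S).mul continuous_const

lemma feas_nonempty (x : Fin n → ℝ) (hx : x ∈ Set.Icc (0 : Fin n → ℝ) 1) :
    (Feas x).Nonempty := by
  classical
  have hx0 : ∀ i, 0 ≤ x i := fun i => hx.1 i
  have hx1 : ∀ i, x i ≤ 1 := fun i => hx.2 i
  refine ⟨fun S => (∏ i ∈ S, x i) * ∏ i ∈ univ \ S, (1 - x i), ?_, ?_, ?_⟩
  · intro S
    apply mul_nonneg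
    · exact Finset.prod_nonneg fun i _ => hx0 i
    · exact Finset.prod_nonneg fun i _ => by linarith [hx1 i]
  · have h := Finset.prod_add x (fun i => 1 - x i) (univ : Finset (Fin n))
    rw [Finset.powerset_univ] at h
    rw [show (∑ S : Finset (Fin n), (∏ i ∈ S, x i) * ∏ i ∈ univ \ S, (1 - x i)) =
        ∏ i, (x i + (1 - x i)) from h.symm]
    exact Finset.prod_eq_one fun i _ => by ring
  · intro i
    set g : Fin n → ℝ := fun j => if j = i then 0 else 1 - x j with hg
    have h := Finset.prod_add x g (univ : Finset (Fin n))
    rw [Finset.powerset_univ] at h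
    have hL : (∏ j, (x j + g j)) = x i := by
      rw [Finset.prod_eq_single i]
      · simp [hg]
      · intro j _ hji; simp only [hg, if_neg hji]; ring
      · intro hi; exact absurd (mem_univ i) hi
    have hR : ∀ S : Finset (Fin n), ((∏ j ∈ S, x j) * ∏ j ∈ univ \ S, (1 - x j)) *
        (if i ∈ S then (1:ℝ) else 0) = (∏ j ∈ S, x j) * (∏ j ∈ univ \ S, g j) := by
      intro S
      by_cases hiS : i ∈ S
      · rw [if_pos hiS, mul_one]
        congr 1
        apply Finset.prod_congr rfl
        intro j hj
        have hji : j ≠ i := by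
          intro hji; subst hji; exact (Finset.mem_sdiff.1 hj).2 hiS
        simp [hg, hji]
      · rw [if_neg hiS, mul_zero]
        have hgi : g i = 0 := by simp [hg]
        rw [Finset.prod_eq_zero (Finset.mem_sdiff.2 ⟨mem_univ i, hiS⟩) hgi, mul_zero]
    calc (∑ S : Finset (Fin n), ((∏ j ∈ S, x j) * ∏ j ∈ univ \ S, (1 - x j)) *
            (if i ∈ S then (1:ℝ) else 0))
        = ∑ S : Finset (Fin n), (∏ j ∈ S, x j) * (∏ j ∈ univ \ S, g j) :=
          Finset.sum_congr rfl fun S _ => hR S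
      _ = ∏ j, (x j + g j) := h.symm
      _ = x i := hL

end Aux

noncomputable def concaveClosure {n : ℕ} (v : Finset (Fin n) → ℝ) (x : Fin n → ℝ) : ℝ :=
  sSup {r : ℝ | ∃ lam : Finset (Fin n) → ℝ,
    (∀ S, 0 ≤ lam S) ∧ (∑ S, lam S = 1) ∧
    (∀ i, (∑ S, lam S * (if i ∈ S then 1 else 0)) = x i) ∧
    r = ∑ S, lam S * v S}

/-- for rational `x ∈ [0,1]^n`, the concave closure `v⁺(x)` is attained by an
equal-weight combination: there is `k > 0` with `k·x` integral and sets `S_1, …, S_k` with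
`∑_t 1_{S_t} = k·x` such that `v⁺(x) = (1/k) ∑_t v(S_t)`; moreover, every such equal-weight
combination has value at most `v⁺(x)`. -/
theorem concaveClosure_eq_equitable_combination
    (n : ℕ) (v : Finset (Fin n) → ℝ) (x : Fin n → ℝ)
    (hx : x ∈ Set.Icc (0 : Fin n → ℝ) 1)
    (hrat : ∀ i, ∃ r : ℚ, x i = (r : ℝ)) :
    (∃ k : ℕ, 0 < k ∧ (∀ i, ∃ z : ℤ, (k : ℝ) * x i = (z : ℝ)) ∧
      ∃ S : Fin k → Finset (Fin n),
        (∀ i, (∑ t, if i ∈ S t then (1 : ℝ) else 0) = (k : ℝ) * x i) ∧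
        concaveClosure v x = (1 / (k : ℝ)) * ∑ t, v (S t)) ∧
    (∀ k : ℕ, 0 < k → ∀ S : Fin k → Finset (Fin n),
      (∀ i, (∑ t, if i ∈ S t then (1 : ℝ) else 0) = (k : ℝ) * x i) →
      (1 / (k : ℝ)) * ∑ t, v (S t) ≤ concaveClosure v x) := by
  classical
  have hcc : concaveClosure v x = sSup (sval v '' Feas x) := by
    unfold concaveClosure
    congr 1
    ext r
    constructor
    · rintro ⟨lam, h1, h2, h3, h4⟩
      exact ⟨lam, ⟨h1, h2, h3⟩, h4.symm⟩
    · rintro ⟨lam, ⟨h1, h2, h3⟩, h4⟩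
      exact ⟨lam, h1, h2, h3, h4.symm⟩
  have hPne : (Feas x).Nonempty := feas_nonempty x hx
  have hPc : IsCompact (Feas x) := feas_compact x
  have hVc : IsCompact (sval v '' Feas x) := hPc.image (sval_continuous v)
  have hVne : (sval v '' Feas x).Nonempty := hPne.image _
  have hbdd : BddAbove (sval v '' Feas x) := hVc.bddAbove
  set M := sSup (sval v '' Feas x) with hMdef
  have hMmem : M ∈ sval v '' Feas x := hVc.sSup_mem hVne
  -- every equitable tuple's value is attained by a feasible lam
  have htup : ∀ (k : ℕ), 0 < k → ∀ S : Fin k → Finset (Fin n),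
      (∀ i, (∑ t, if i ∈ S t then (1:ℝ) else 0) = (k:ℝ) * x i) →
      (1/(k:ℝ)) * ∑ t, v (S t) ∈ sval v '' Feas x := by
    intro k hk S hS
    have hk' : ((k:ℝ)) ≠ 0 := by positivity
    set lam : Finset (Fin n) → ℝ :=
      fun T => (1/(k:ℝ)) * ((univ.filter (fun t => S t = T)).card : ℝ) with hlam
    have hfib : ∀ (f : Finset (Fin n) → ℝ),
        ∑ T, ((univ.filter (fun t => S t = T)).card : ℝ) * f T = ∑ t, f (S t) := by
      intro f
      rw [← Finset.sum_fiberwise univ (fun t => S t) (fun t => f (S t))]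
      apply Finset.sum_congr rfl
      intro T _
      rw [Finset.sum_congr rfl (fun t ht => by rw [(Finset.mem_filter.1 ht).2]),
        Finset.sum_const, nsmul_eq_mul]
    have hcard : ∑ T, ((univ.filter (fun t => S t = T)).card : ℝ) = (k:ℝ) := by
      have h := Finset.card_eq_sum_card_fiberwise
        (f := fun t => S t) (s := (univ : Finset (Fin k))) (t := univ) (fun t _ => mem_univ _)
      rw [Finset.card_univ, Fintype.card_fin] at h
      exact_mod_cast congrArg (fun z : ℕ => (z:ℝ)) h.symm
    refine ⟨lam, ⟨?_, ?_, ?_⟩, ?_⟩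
    · intro T; simp only [hlam]; positivity
    · rw [show (∑ T, lam T) =
          (1/(k:ℝ)) * ∑ T, ((univ.filter (fun t => S t = T)).card : ℝ) from
          by rw [Finset.mul_sum]]
      rw [hcard]; field_simp
    · intro i
      rw [show (∑ T, lam T * (if i ∈ T then (1:ℝ) else 0)) =
          (1/(k:ℝ)) * ∑ T, ((univ.filter (fun t => S t = T)).card : ℝ) *
            (if i ∈ T then (1:ℝ) else 0) from by rw [Finset.mul_sum]; congr 1; ext T; ring]
      rw [hfib (fun T => if i ∈ T then (1:ℝ) else 0), hS i]
      field_simp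
    · rw [show sval v lam =
          (1/(k:ℝ)) * ∑ T, ((univ.filter (fun t => S t = T)).card : ℝ) * v T from
          by unfold sval; rw [Finset.mul_sum]; congr 1; ext T; ring]
      rw [hfib v]
  -- choose a maximizer with minimal support
  have hsuppc : True := trivial
  obtain ⟨lam1, hlam1P, hlam1M⟩ := hMmem
  have hCne : {c : ℕ | ∃ lam, lam ∈ Feas x ∧ sval v lam = M ∧
      (univ.filter (fun S => lam S ≠ 0)).card = c}.Nonempty :=
    ⟨_, lam1, hlam1P, hlam1M, rfl⟩
  obtain ⟨l, hlP, hlM, hlc⟩ := Nat.sInf_mem hCne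
  obtain ⟨hl1, hl2, hl3⟩ := hlP
  have hmin : ∀ mu, mu ∈ Feas x → sval v mu = M →
      (univ.filter (fun S => l S ≠ 0)).card ≤ (univ.filter (fun S => mu S ≠ 0)).card := by
    intro mu h1 h2
    rw [hlc]
    exact Nat.sInf_le ⟨mu, h1, h2, rfl⟩
  -- the minimal-support maximizer is rational
  have hlrat : ∀ S, ∃ q : ℚ, l S = (q:ℝ) := by
    by_contra hcon
    push_neg at hcon
    obtain ⟨S0, hS0⟩ := hcon
    obtain ⟨f, hf1, hft⟩ := exists_qlinear (l S0) (fun r => hS0 r)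
    set d : Finset (Fin n) → ℝ := fun S => f (l S) - l S with hd
    have hd0 : d S0 ≠ 0 := sub_ne_zero.2 hft
    have hdsupp : ∀ S, l S = 0 → d S = 0 := fun S h => by simp [hd, h]
    have hfrat : ∀ r : ℚ, f ((r:ℝ)) = (r:ℝ) := by
      intro r
      have h : ((r:ℝ)) = r • (1:ℝ) := by rw [Rat.smul_def]; ring
      rw [h, map_smul, hf1]
    have hdsum : ∑ S, d S = 0 := by
      simp only [hd]
      rw [Finset.sum_sub_distrib, ← map_sum, hl2, hf1]
      ring
    have hdmarg : ∀ i, ∑ S, d S * (if i ∈ S then (1:ℝ) else 0) = 0 := by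
      intro i
      have key : ∀ S, d S * (if i ∈ S then (1:ℝ) else 0) =
          f (l S * (if i ∈ S then (1:ℝ) else 0)) - l S * (if i ∈ S then (1:ℝ) else 0) := by
        intro S; by_cases h : i ∈ S <;> simp [hd, h]
      rw [Finset.sum_congr rfl (fun S _ => key S), Finset.sum_sub_distrib, ← map_sum,
        hl3 i]
      obtain ⟨r, hr⟩ := hrat i
      rw [hr, hfrat r]
      ring
    -- support-reduction contradiction
    have hsne : (univ.filter (fun S => d S ≠ 0)).Nonempty :=
      ⟨S0, Finset.mem_filter.2 ⟨mem_univ _, hd0⟩⟩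
    obtain ⟨S2, hS2mem, hS2min⟩ := Finset.exists_min_image _ (fun S => l S / |d S|) hsne
    have hdS2 : d S2 ≠ 0 := (Finset.mem_filter.1 hS2mem).2
    have hlS2pos : 0 < l S2 :=
      lt_of_le_of_ne (hl1 S2) (fun h => hdS2 (hdsupp S2 h.symm))
    set ε : ℝ := l S2 / |d S2| with hεdef
    have hεpos : 0 < ε := div_pos hlS2pos (abs_pos.2 hdS2)
    have hbound : ∀ S, |d S| * ε ≤ l S := by
      intro S
      by_cases h : d S = 0
      · simp [h]; exact hl1 S
      · have hle := hS2min S (Finset.mem_filter.2 ⟨mem_univ _, h⟩)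
        have habs : (0:ℝ) < |d S| := abs_pos.2 h
        calc |d S| * ε ≤ |d S| * (l S / |d S|) :=
              mul_le_mul_of_nonneg_left hle (abs_nonneg _)
          _ = l S := by field_simp
    have hmem : ∀ c : ℝ, |c| ≤ ε → (fun S => l S + c * d S) ∈ Feas x := by
      intro c hc
      refine ⟨?_, ?_, ?_⟩
      · intro S
        have h1 : |c * d S| ≤ l S := by
          rw [abs_mul]
          calc |c| * |d S| ≤ ε * |d S| := mul_le_mul_of_nonneg_right hc (abs_nonneg _)
            _ = |d S| * ε := mul_comm _ _
            _ ≤ l S := hbound S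
        have h2 := neg_abs_le (c * d S)
        simp only []
        linarith
      · simp only []
        rw [Finset.sum_add_distrib, hl2, ← Finset.mul_sum, hdsum]
        ring
      · intro i
        simp only []
        rw [Finset.sum_congr rfl (fun S _ => by ring :
            ∀ S ∈ univ, (l S + c * d S) * (if i ∈ S then (1:ℝ) else 0) =
              l S * (if i ∈ S then (1:ℝ) else 0) + c * (d S * (if i ∈ S then (1:ℝ) else 0)))]
        rw [Finset.sum_add_distrib, hl3 i, ← Finset.mul_sum, hdmarg i]
        ring
    set vd : ℝ := ∑ S, d S * v S with hvd
    have hval : ∀ c : ℝ, sval v (fun S => l S + c * d S) = M + c * vd := by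
      intro c
      unfold sval
      rw [Finset.sum_congr rfl (fun S _ => by ring :
          ∀ S ∈ univ, (l S + c * d S) * v S = l S * v S + c * (d S * v S))]
      rw [Finset.sum_add_distrib, ← Finset.mul_sum]
      have : (∑ S, l S * v S) = M := hlM
      rw [this]
    have hle : ∀ c : ℝ, |c| ≤ ε → M + c * vd ≤ M := by
      intro c hc
      rw [← hval c]
      exact le_csSup hbdd ⟨_, hmem c hc, rfl⟩
    have hvd0 : vd = 0 := by
      have h1 := hle ε (le_of_eq (abs_of_pos hεpos))
      have h2 := hle (-ε) (by rw [abs_neg, abs_of_pos hεpos])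
      nlinarith
    set σ : ℝ := if 0 < d S2 then -ε else ε with hσ
    have hσabs : |σ| = ε := by
      rw [hσ]
      split
      · rw [abs_neg, abs_of_pos hεpos]
      · rw [abs_of_pos hεpos]
    have hl'P : (fun S => l S + σ * d S) ∈ Feas x := hmem σ (le_of_eq hσabs)
    have hl'M : sval v (fun S => l S + σ * d S) = M := by rw [hval σ, hvd0]; ring
    have hl'S2 : l S2 + σ * d S2 = 0 := by
      rw [hσ, hεdef]
      rcases lt_or_gt_of_ne hdS2 with h | h
      · rw [if_neg (not_lt.2 h.le), abs_of_neg h,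
          div_mul_eq_mul_div, div_neg, mul_div_cancel_right₀ _ (ne_of_lt h)]
        ring
      · rw [if_pos h, abs_of_pos h, neg_mul, div_mul_cancel₀ _ (ne_of_gt h)]
        ring
    have hsubset : univ.filter (fun S => l S + σ * d S ≠ 0) ⊆
        univ.filter (fun S => l S ≠ 0) := by
      intro S hS
      rcases Finset.mem_filter.1 hS with ⟨_, hne⟩
      refine Finset.mem_filter.2 ⟨mem_univ _, ?_⟩
      intro h0
      exact hne (by rw [h0, hdsupp S h0]; ring)
    have hsub : univ.filter (fun S => l S + σ * d S ≠ 0) ⊂ univ.filter (fun S => l S ≠ 0) :=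
      (Finset.ssubset_iff_of_subset hsubset).2
        ⟨S2, Finset.mem_filter.2 ⟨mem_univ _, ne_of_gt hlS2pos⟩,
          fun hmem' => (Finset.mem_filter.1 hmem').2 hl'S2⟩
    have hlt := Finset.card_lt_card hsub
    have hge := hmin _ hl'P hl'M
    exact lt_irrefl _ (lt_of_le_of_lt hge hlt)
  -- extract rational weights and a common denominator
  choose q hq using hlrat
  have hq0 : ∀ S, 0 ≤ q S := by
    intro S
    have := hl1 S
    rw [hq S] at this
    exact_mod_cast this
  set k : ℕ := ∏ S, (q S).den with hkdef
  have hkpos : 0 < k := Finset.prod_pos fun S _ => (q S).pos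
  have hk' : ((k:ℝ)) ≠ 0 := by positivity
  have hdvd : ∀ S, (q S).den ∣ k := fun S => Finset.dvd_prod_of_mem _ (mem_univ S)
  have hm : ∀ S, ∃ m : ℕ, ((m:ℚ)) = (k:ℚ) * q S := by
    intro S
    obtain ⟨c, hc⟩ := hdvd S
    refine ⟨c * (q S).num.toNat, ?_⟩
    have hnum : (((q S).num.toNat : ℤ)) = (q S).num := Int.toNat_of_nonneg (Rat.num_nonneg.2 (hq0 S))
    have hkq : ((k:ℚ)) = ((q S).den : ℚ) * (c : ℚ) := by
      exact_mod_cast congrArg (fun z : ℕ => (z:ℚ)) hc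
    rw [hkq]
    push_cast
    rw [show (((q S).num.toNat:ℚ)) = (((q S).num:ℚ)) from by exact_mod_cast hnum]
    linear_combination (-(c:ℚ)) * Rat.mul_den_eq_num (q S)
  choose m hmq using hm
  have hmR : ∀ S, ((m S : ℝ)) = (k:ℝ) * l S := by
    intro S
    rw [hq S]
    exact_mod_cast congrArg (fun z : ℚ => (z:ℝ)) (hmq S)
  have hmsum : ∑ S, m S = k := by
    have h : ((∑ S, m S : ℕ) : ℝ) = ((k : ℕ):ℝ) := by
      push_cast
      rw [Finset.sum_congr rfl (fun S _ => hmR S), ← Finset.mul_sum, hl2]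
      ring
    exact_mod_cast h
  have hcard : Fintype.card (Σ T : Finset (Fin n), Fin (m T)) = k := by
    simp [Fintype.card_sigma, hmsum]
  set e := Fintype.equivFinOfCardEq hcard with he
  set St : Fin k → Finset (Fin n) := fun t => (e.symm t).1 with hSt
  have hsum_g : ∀ g : Finset (Fin n) → ℝ, (∑ t, g (St t)) = ∑ T, (m T : ℝ) * g T := by
    intro g
    rw [← Equiv.sum_comp e (fun t => g (St t))]
    rw [Finset.sum_congr rfl (fun p _ => by simp [hSt] :
        ∀ p ∈ (univ : Finset (Σ T : Finset (Fin n), Fin (m T))), g (St (e p)) = g p.1)]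
    rw [← Finset.univ_sigma_univ, Finset.sum_sigma]
    simp [mul_comm]
  have hmargSt : ∀ i, (∑ t, if i ∈ St t then (1:ℝ) else 0) = (k:ℝ) * x i := by
    intro i
    rw [show (∑ t, if i ∈ St t then (1:ℝ) else 0) =
        ∑ t, (fun T => if i ∈ T then (1:ℝ) else 0) (St t) from rfl]
    rw [hsum_g (fun T => if i ∈ T then (1:ℝ) else 0)]
    rw [← hl3 i, Finset.mul_sum]
    apply Finset.sum_congr rfl
    intro T _
    rw [← mul_assoc, ← hmR T]
  constructor
  · refine ⟨k, hkpos, ?_, St, hmargSt, ?_⟩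
    · intro i
      refine ⟨(∑ T ∈ univ.filter (fun T => i ∈ T), (m T : ℤ)), ?_⟩
      rw [← hmargSt i]
      rw [show (∑ t, if i ∈ St t then (1:ℝ) else 0) =
          ∑ t, (fun T => if i ∈ T then (1:ℝ) else 0) (St t) from rfl]
      rw [hsum_g (fun T => if i ∈ T then (1:ℝ) else 0)]
      rw [Finset.sum_congr rfl (fun T _ => by split <;> ring :
          ∀ T ∈ univ, (m T : ℝ) * (if i ∈ T then (1:ℝ) else 0) =
            if i ∈ T then (m T : ℝ) else 0)]
      rw [← Finset.sum_filter]
      push_cast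
      rfl
    · rw [hcc, ← hlM]
      rw [hsum_g v]
      unfold sval
      rw [Finset.mul_sum]
      apply Finset.sum_congr rfl
      intro T _
      rw [hmR T]
      field_simp
  · intro k' hk'' S hS
    rw [hcc]
    exact le_csSup hbdd (htup k' hk'' S hS)
end

section
/- Let n ≥ 1, let w_1, …, w_n ≥ 0 be job weights, and for p ∈ ℝ≥0^n define F(p) := min over permutations σ of {1,…,n} of ∑_{j=1}^n w_j · ( ∑_{j' : σ(j') ≤ σ(j)} p_{j'} ). Then F(p) = ∑_{j=1}^n w_j p_j + ∑_{1 ≤ j < k ≤ n} min( w_j p_k, w_k p_j ). -/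
open Finset
open scoped ENNReal

/-- The total weighted completion time of jobs `Fin n` with weights `w` and processing
times `p`, scheduled non-preemptively on one machine in the order given by the permutation
`σ`: job `j` completes at time `∑_{j' : σ j' ≤ σ j} p j'`. -/
def weightedCompletionTime {n : ℕ} (w p : Fin n → ℝ) (σ : Equiv.Perm (Fin n)) : ℝ :=
  ∑ j, w j * ∑ j' ∈ Finset.univ.filter (fun j' => σ j' ≤ σ j), p j'

/-- The minimum total weighted completion time over all orderings of the jobs. -/
noncomputable def minWeightedCompletionTime {n : ℕ} (w p : Fin n → ℝ) : ℝ :=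
  Finset.univ.inf' ⟨1, Finset.mem_univ 1⟩ (fun σ : Equiv.Perm (Fin n) => weightedCompletionTime w p σ)

/-- Reindexing a double sum over ordered pairs into a sum over `j < k` pairs. -/
lemma pairSum {n : ℕ} (σ : Equiv.Perm (Fin n)) (f : Fin n → Fin n → ℝ) :
    ∑ j, ∑ k, (if σ k < σ j then f j k else 0)
      = ∑ j, ∑ k, (if j < k then (if σ j < σ k then f k j else f j k) else 0) := by
  have key : ∀ j k : Fin n, (if j < k then (if σ j < σ k then f k j else f j k) else 0)
      = (if j < k ∧ σ j < σ k then f k j else 0) + (if j < k ∧ σ k < σ j then f j k else 0) := by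
    intro j k
    rcases lt_trichotomy j k with h | h | h
    · have hne : σ j ≠ σ k := fun hc => absurd (σ.injective hc) h.ne
      rcases lt_or_gt_of_ne hne with h2 | h2 <;>
        simp [h, h2, not_lt_of_gt h2, le_of_lt h2]
    · simp [h, lt_irrefl]
    · simp [not_lt_of_gt h]
  calc ∑ j, ∑ k, (if σ k < σ j then f j k else 0)
      = ∑ j, ∑ k, ((if k < j ∧ σ k < σ j then f j k else 0)
          + (if j < k ∧ σ k < σ j then f j k else 0)) := by
        refine Finset.sum_congr rfl fun j _ => Finset.sum_congr rfl fun k _ => ?_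
        rcases lt_trichotomy j k with h | h | h
        · simp [h, not_lt_of_gt h]
        · subst h; simp [lt_irrefl]
        · simp [h, not_lt_of_gt h]
    _ = ∑ j, ∑ k, (if k < j ∧ σ k < σ j then f j k else 0)
          + ∑ j, ∑ k, (if j < k ∧ σ k < σ j then f j k else 0) := by
        rw [← Finset.sum_add_distrib]
        exact Finset.sum_congr rfl fun j _ => Finset.sum_add_distrib
    _ = ∑ j, ∑ k, (if j < k ∧ σ j < σ k then f k j else 0)
          + ∑ j, ∑ k, (if j < k ∧ σ k < σ j then f j k else 0) := by
        congr 1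
        rw [Finset.sum_comm]
    _ = ∑ j, ∑ k, (if j < k then (if σ j < σ k then f k j else f j k) else 0) := by
        rw [← Finset.sum_add_distrib]
        refine Finset.sum_congr rfl fun j _ => ?_
        rw [← Finset.sum_add_distrib]
        exact Finset.sum_congr rfl fun k _ => (key j k).symm

/-- The total weighted completion time decomposed into diagonal and pairwise terms. -/
lemma wct_eq {n : ℕ} (w p : Fin n → ℝ) (σ : Equiv.Perm (Fin n)) :
    weightedCompletionTime w p σ = (∑ j, w j * p j) +
      ∑ j, ∑ k ∈ Finset.univ.filter (fun k => j < k),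
        (if σ j < σ k then w k * p j else w j * p k) := by
  have hfilter : ∀ j : Fin n, Finset.univ.filter (fun j' => σ j' ≤ σ j)
      = insert j (Finset.univ.filter (fun j' => σ j' < σ j)) := by
    intro j
    ext j'
    simp only [Finset.mem_filter, Finset.mem_univ, true_and, Finset.mem_insert]
    constructor
    · intro h
      rcases eq_or_lt_of_le h with h1 | h1
      · exact Or.inl (σ.injective h1)
      · exact Or.inr h1
    · rintro (rfl | h1)
      · exact le_refl _
      · exact le_of_lt h1
  have hnotmem : ∀ j : Fin n, j ∉ Finset.univ.filter (fun j' => σ j' < σ j) := by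
    intro j h
    simp at h
  calc weightedCompletionTime w p σ
      = ∑ j, (w j * p j + w j * ∑ j' ∈ Finset.univ.filter (fun j' => σ j' < σ j), p j') := by
        refine Finset.sum_congr rfl fun j _ => ?_
        rw [hfilter j, Finset.sum_insert (hnotmem j), mul_add]
    _ = (∑ j, w j * p j) + ∑ j, ∑ j' ∈ Finset.univ.filter (fun j' => σ j' < σ j), w j * p j' := by
        rw [Finset.sum_add_distrib]
        congr 1
        exact Finset.sum_congr rfl fun j _ => Finset.mul_sum _ _ _
    _ = (∑ j, w j * p j) + ∑ j, ∑ k, (if σ k < σ j then w j * p k else 0) := by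
        congr 1
        exact Finset.sum_congr rfl fun j _ => Finset.sum_filter _ _
    _ = (∑ j, w j * p j) +
        ∑ j, ∑ k ∈ Finset.univ.filter (fun k => j < k),
          (if σ j < σ k then w k * p j else w j * p k) := by
        rw [pairSum σ (fun j k => w j * p k)]
        congr 1
        exact Finset.sum_congr rfl fun j _ => (Finset.sum_filter _ _).symm

/-- Existence of a Smith ordering: a permutation ordering the jobs by
nondecreasing ratio `p j / w j`. -/
lemma smith_exists {n : ℕ} (w p : Fin n → ℝ) (hw : ∀ j, 0 ≤ w j) (hp : ∀ j, 0 ≤ p j) :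
    ∃ σ : Equiv.Perm (Fin n), ∀ j k, σ j < σ k → p j * w k ≤ p k * w j := by
  set key : Fin n → ℝ≥0∞ := fun j => ENNReal.ofReal (p j) / ENNReal.ofReal (w j) with hkey
  refine ⟨(Tuple.sort key)⁻¹, fun j k hjk => ?_⟩
  have hmono := Tuple.monotone_sort key
  have hk : key j ≤ key k := by
    have := hmono hjk.le
    simpa using this
  -- Now derive the cross-multiplied inequality
  rcases eq_or_lt_of_le (hw k) with hwk | hwk
  · -- w k = 0 : goal is p j * 0 ≤ p k * w j
    rw [← hwk]
    simpa using mul_nonneg (hp k) (hw j)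
  rcases eq_or_lt_of_le (hw j) with hwj | hwj
  · -- w j = 0 : need p j = 0
    rw [← hwj, mul_zero]
    rcases eq_or_lt_of_le (hp j) with hpj | hpj
    · rw [← hpj, zero_mul]
    · exfalso
      have h1 : key j = ⊤ := by
        simp only [hkey, ← hwj, ENNReal.ofReal_zero]
        exact ENNReal.div_zero (by simp [ENNReal.ofReal_eq_zero, not_le.mpr hpj])
      have h2 : key k ≠ ⊤ := by
        simp only [hkey]
        exact (ENNReal.div_lt_top ENNReal.ofReal_ne_top
          (by simp [ENNReal.ofReal_eq_zero, not_le.mpr hwk])).ne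
      exact h2 (top_le_iff.mp (h1 ▸ hk))
  · -- w j > 0 and w k > 0
    have hjt : key j ≠ ⊤ :=
      (ENNReal.div_lt_top ENNReal.ofReal_ne_top
        (by simp [ENNReal.ofReal_eq_zero, not_le.mpr hwj])).ne
    have hkt : key k ≠ ⊤ :=
      (ENNReal.div_lt_top ENNReal.ofReal_ne_top
        (by simp [ENNReal.ofReal_eq_zero, not_le.mpr hwk])).ne
    have hr : p j / w j ≤ p k / w k := by
      have := ENNReal.toReal_mono hkt hk
      rwa [hkey, ENNReal.toReal_div, ENNReal.toReal_div,
        ENNReal.toReal_ofReal (hp j), ENNReal.toReal_ofReal (hw j),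
        ENNReal.toReal_ofReal (hp k), ENNReal.toReal_ofReal (hw k)] at this
    exact (div_le_div_iff₀ hwj hwk).mp hr

/-- closed form for the minimum total weighted completion time:
`F(p) = ∑_j w_j p_j + ∑_{j < k} min (w_j p_k) (w_k p_j)`. -/
theorem minWeightedCompletionTime_closed_form
    (n : ℕ) (hn : 1 ≤ n) (w p : Fin n → ℝ)
    (hw : ∀ j, 0 ≤ w j) (hp : ∀ j, 0 ≤ p j) :
    minWeightedCompletionTime w p =
      (∑ j, w j * p j) +
        ∑ j, ∑ k ∈ Finset.univ.filter (fun k => j < k), min (w j * p k) (w k * p j) := by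
  apply le_antisymm
  · -- upper bound: the Smith ordering achieves the closed form
    obtain ⟨σ, hσ⟩ := smith_exists w p hw hp
    have heq : weightedCompletionTime w p σ = (∑ j, w j * p j) +
        ∑ j, ∑ k ∈ Finset.univ.filter (fun k => j < k), min (w j * p k) (w k * p j) := by
      rw [wct_eq]
      congr 1
      refine Finset.sum_congr rfl fun j _ => Finset.sum_congr rfl fun k hk => ?_
      simp only [Finset.mem_filter] at hk
      have hne : σ j ≠ σ k := fun hc => absurd (σ.injective hc) hk.2.ne
      rcases lt_or_gt_of_ne hne with h | h
      · have := hσ j k h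
        rw [if_pos h, min_eq_right (by nlinarith)]
      · have := hσ k j h
        rw [if_neg (not_lt_of_gt h), min_eq_left (by nlinarith)]
    calc minWeightedCompletionTime w p ≤ weightedCompletionTime w p σ :=
          Finset.inf'_le _ (Finset.mem_univ σ)
      _ = _ := heq
  · -- lower bound: every ordering is at least the closed form
    apply Finset.le_inf'
    intro σ _
    rw [wct_eq]
    gcongr with j _ k hk
    simp only [Finset.mem_filter] at hk
    split_ifs with h
    · exact min_le_right _ _
    · exact min_le_left _ _
end

section
/- Let n ≥ 1, let w_1, …, w_n ≥ 0 be job weights, and for p ∈ ℝ≥0^n define F(p) := min over permutations σ of {1,…,n} of ∑_{j=1}^n w_j · ( ∑_{j' : σ(j') ≤ σ(j)} p_{j'} ). Then F is supermodular on ℝ≥0^n: for all p, p' ∈ ℝ≥0^n, F(p) + F(p') ≤ F(p ⊔ p') + F(p ⊓ p'), where ⊔ and ⊓ denote componentwise maximum and minimum. -/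
/-- The closed form of the minimum weighted completion time (Smith's rule value). -/
noncomputable def smithValue {n : ℕ} (w p : Fin n → ℝ) : ℝ :=
  (∑ j, w j * p j) + (1/2) * ∑ i, ∑ j, if i = j then 0 else min (w i * p j) (w j * p i)

lemma cost_eq {n : ℕ} (w p : Fin n → ℝ) (σ : Equiv.Perm (Fin n)) :
    weightedCompletionTime w p σ =
      (∑ j, w j * p j) + ∑ i, ∑ j, if σ i < σ j then w j * p i else 0 := by
  unfold weightedCompletionTime
  have h1 : ∀ j, w j * ∑ j' ∈ Finset.univ.filter (fun j' => σ j' ≤ σ j), p j'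
      = ∑ i, if σ i ≤ σ j then w j * p i else 0 := by
    intro j
    rw [Finset.mul_sum, Finset.sum_filter]
  simp_rw [h1]
  rw [Finset.sum_comm]
  have h2 : ∀ i j : Fin n, (if σ i ≤ σ j then w j * p i else 0)
      = (if i = j then w j * p i else 0) + (if σ i < σ j then w j * p i else 0) := by
    intro i j
    rcases eq_or_ne i j with h | h
    · subst h; simp
    · have hne : σ i ≠ σ j := fun hc => h (σ.injective hc)
      rcases lt_or_gt_of_ne hne with hlt | hgt
      · simp [hlt, hlt.le, h]
      · simp [h, hgt.not_gt, hgt.not_ge]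
  simp_rw [h2, Finset.sum_add_distrib]
  congr 1
  have h3 : ∀ i : Fin n, (∑ j, if i = j then w j * p i else 0) = w i * p i := by
    intro i
    rw [Finset.sum_ite_eq]
    simp
  simp_rw [h3]

lemma double_sum_eq {n : ℕ} (σ : Equiv.Perm (Fin n)) (m : Fin n → Fin n → ℝ)
    (hm : ∀ i j, m i j = m j i) :
    (∑ i, ∑ j, if i = j then (0:ℝ) else m i j)
      = 2 * ∑ i, ∑ j, if σ i < σ j then m i j else 0 := by
  have h : ∀ i j : Fin n, (if i = j then (0:ℝ) else m i j)
      = (if σ i < σ j then m i j else 0) + (if σ j < σ i then m i j else 0) := by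
    intro i j
    rcases eq_or_ne i j with h | h
    · subst h; simp
    · have hne : σ i ≠ σ j := fun hc => h (σ.injective hc)
      rcases lt_or_gt_of_ne hne with hlt | hgt
      · simp [h, hlt, hlt.not_gt.imp, not_lt.mpr hlt.le]
      · simp [h, hgt, hgt.not_gt]
  simp_rw [h, Finset.sum_add_distrib]
  have h4 : (∑ i, ∑ j, if σ j < σ i then m i j else 0)
      = ∑ i, ∑ j, if σ i < σ j then m i j else 0 := by
    rw [Finset.sum_comm]
    congr 1; ext i; congr 1; ext j
    rw [hm i j]
  rw [h4]; ring

lemma smith_le_cost {n : ℕ} (w p : Fin n → ℝ) (σ : Equiv.Perm (Fin n)) :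
    smithValue w p ≤ weightedCompletionTime w p σ := by
  rw [cost_eq, smithValue, double_sum_eq σ _ (fun i j => min_comm _ _)]
  have : (1/2 : ℝ) * (2 * ∑ i, ∑ j, if σ i < σ j then min (w i * p j) (w j * p i) else 0)
      = ∑ i, ∑ j, if σ i < σ j then min (w i * p j) (w j * p i) else 0 := by ring
  rw [this]
  gcongr with i _ j _
  split
  · exact min_le_right _ _
  · exact le_rfl

lemma key_lemma {n : ℕ} (w p : Fin n → ℝ) (hw : ∀ j, 0 ≤ w j) (hp : ∀ j, 0 ≤ p j)
    {i j : Fin n}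
    (h : ENNReal.ofReal (p i) / ENNReal.ofReal (w i)
        ≤ ENNReal.ofReal (p j) / ENNReal.ofReal (w j)) :
    w j * p i ≤ w i * p j := by
  rcases eq_or_lt_of_le (hw j) with hwj | hwj
  · rw [← hwj]; simpa using mul_nonneg (hw i) (hp j)
  rcases eq_or_lt_of_le (hw i) with hwi | hwi
  · -- w i = 0
    rcases eq_or_lt_of_le (hp i) with hpi | hpi
    · rw [← hpi]; simpa using mul_nonneg (hw i) (hp j)
    · exfalso
      have htop : ENNReal.ofReal (p i) / ENNReal.ofReal (w i) = ⊤ := by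
        rw [← hwi, ENNReal.ofReal_zero]
        exact ENNReal.div_zero (by simp [ENNReal.ofReal_eq_zero, not_le.mpr hpi])
      have hlt : ENNReal.ofReal (p j) / ENNReal.ofReal (w j) < ⊤ :=
        ENNReal.div_lt_top (ENNReal.ofReal_ne_top)
          (by simp [ENNReal.ofReal_eq_zero, not_le.mpr hwj])
      rw [htop] at h
      exact (not_le.mpr hlt) h
  · -- both weights positive
    rw [← ENNReal.ofReal_div_of_pos hwi, ← ENNReal.ofReal_div_of_pos hwj] at h
    have h' : p i / w i ≤ p j / w j := by
      rw [ENNReal.ofReal_le_ofReal_iff (div_nonneg (hp j) (hw j))] at h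
      exact h
    rw [div_le_div_iff₀ hwi hwj] at h'
    linarith [h']

lemma exists_cost_le_smith {n : ℕ} (w p : Fin n → ℝ) (hw : ∀ j, 0 ≤ w j)
    (hp : ∀ j, 0 ≤ p j) :
    ∃ σ : Equiv.Perm (Fin n), weightedCompletionTime w p σ ≤ smithValue w p := by
  set k : Fin n → ENNReal := fun i => ENNReal.ofReal (p i) / ENNReal.ofReal (w i) with hk
  set τ : Equiv.Perm (Fin n) := Tuple.sort k with hτ
  refine ⟨τ⁻¹, ?_⟩
  have hmono : ∀ i j : Fin n, τ⁻¹ i < τ⁻¹ j → k i ≤ k j := by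
    intro i j hij
    have := Tuple.monotone_sort k (le_of_lt hij)
    simpa [← hτ] using this
  rw [cost_eq, smithValue, double_sum_eq τ⁻¹ _ (fun i j => min_comm _ _)]
  have : (1/2 : ℝ) * (2 * ∑ i, ∑ j, if τ⁻¹ i < τ⁻¹ j then min (w i * p j) (w j * p i) else 0)
      = ∑ i, ∑ j, if τ⁻¹ i < τ⁻¹ j then min (w i * p j) (w j * p i) else 0 := by ring
  rw [this]
  gcongr with i _ j _
  split
  · next hlt =>
      exact le_of_eq (min_eq_right (key_lemma w p hw hp (hmono i j hlt))).symm
  · exact le_rfl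

lemma min_value_eq_smith {n : ℕ} (w p : Fin n → ℝ) (hw : ∀ j, 0 ≤ w j)
    (hp : ∀ j, 0 ≤ p j) :
    minWeightedCompletionTime w p = smithValue w p := by
  apply le_antisymm
  · obtain ⟨σ, hσ⟩ := exists_cost_le_smith w p hw hp
    exact le_trans (Finset.inf'_le _ (Finset.mem_univ σ)) hσ
  · exact Finset.le_inf' _ _ (fun σ _ => smith_le_cost w p σ)

lemma min_supermodular (s t s' t' : ℝ) :
    min s t + min s' t' ≤ min (max s s') (max t t') + min (min s s') (min t t') := by
  rcases le_total (min s t) (min s' t') with h | h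
  · have h1 : min s' t' ≤ min (max s s') (max t t') :=
      le_min (le_trans (min_le_left _ _) (le_max_right _ _))
             (le_trans (min_le_right _ _) (le_max_right _ _))
    have h2 : min s t ≤ min (min s s') (min t t') := by
      simp only [le_min_iff]
      exact ⟨⟨min_le_left _ _, le_trans h (min_le_left _ _)⟩,
             ⟨min_le_right _ _, le_trans h (min_le_right _ _)⟩⟩
    linarith
  · have h1 : min s t ≤ min (max s s') (max t t') :=
      le_min (le_trans (min_le_left _ _) (le_max_left _ _))
             (le_trans (min_le_right _ _) (le_max_left _ _))
    have h2 : min s' t' ≤ min (min s s') (min t t') := by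
      simp only [le_min_iff]
      exact ⟨⟨le_trans h (min_le_left _ _), min_le_left _ _⟩,
             ⟨le_trans h (min_le_right _ _), min_le_right _ _⟩⟩
    linarith

lemma smith_supermodular {n : ℕ} (w : Fin n → ℝ) (hw : ∀ j, 0 ≤ w j)
    (p p' : Fin n → ℝ) :
    smithValue w p + smithValue w p' ≤
      smithValue w (p ⊔ p') + smithValue w (p ⊓ p') := by
  unfold smithValue
  have hlin : (∑ j, w j * (p ⊔ p') j) + (∑ j, w j * (p ⊓ p') j)
      = (∑ j, w j * p j) + (∑ j, w j * p' j) := by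
    rw [← Finset.sum_add_distrib, ← Finset.sum_add_distrib]
    congr 1; ext j
    have : (p ⊔ p') j + (p ⊓ p') j = p j + p' j := by
      simp [Pi.sup_apply, Pi.inf_apply, max_add_min]
    rw [← mul_add, ← mul_add, this]
  have hquad : (∑ i, ∑ j, if i = j then (0:ℝ) else min (w i * p j) (w j * p i))
      + (∑ i, ∑ j, if i = j then (0:ℝ) else min (w i * p' j) (w j * p' i))
      ≤ (∑ i, ∑ j, if i = j then (0:ℝ) else min (w i * (p ⊔ p') j) (w j * (p ⊔ p') i))
      + (∑ i, ∑ j, if i = j then (0:ℝ) else min (w i * (p ⊓ p') j) (w j * (p ⊓ p') i)) := by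
    rw [← Finset.sum_add_distrib, ← Finset.sum_add_distrib]
    apply Finset.sum_le_sum
    intro i _
    rw [← Finset.sum_add_distrib, ← Finset.sum_add_distrib]
    apply Finset.sum_le_sum
    intro j _
    rcases eq_or_ne i j with h | h
    · simp [h]
    · simp only [h, if_false]
      have e1 : w i * (p ⊔ p') j = max (w i * p j) (w i * p' j) := by
        rw [Pi.sup_apply, mul_max_of_nonneg _ _ (hw i)]
      have e2 : w j * (p ⊔ p') i = max (w j * p i) (w j * p' i) := by
        rw [Pi.sup_apply, mul_max_of_nonneg _ _ (hw j)]
      have e3 : w i * (p ⊓ p') j = min (w i * p j) (w i * p' j) := by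
        rw [Pi.inf_apply, mul_min_of_nonneg _ _ (hw i)]
      have e4 : w j * (p ⊓ p') i = min (w j * p i) (w j * p' i) := by
        rw [Pi.inf_apply, mul_min_of_nonneg _ _ (hw j)]
      rw [e1, e2, e3, e4]
      exact min_supermodular _ _ _ _
  linarith

/-- the minimum total weighted completion time `F` is supermodular in the
vector of processing times on the nonnegative orthant. -/
theorem minWeightedCompletionTime_supermodular
    (n : ℕ) (hn : 1 ≤ n) (w : Fin n → ℝ) (hw : ∀ j, 0 ≤ w j) :
    ∀ p p' : Fin n → ℝ, 0 ≤ p → 0 ≤ p' →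
      minWeightedCompletionTime w p + minWeightedCompletionTime w p' ≤
        minWeightedCompletionTime w (p ⊔ p') + minWeightedCompletionTime w (p ⊓ p') := by
  intro p p' hp hp'
  have hp1 : ∀ j, 0 ≤ p j := fun j => hp j
  have hp2 : ∀ j, 0 ≤ p' j := fun j => hp' j
  have hsup : ∀ j, 0 ≤ (p ⊔ p') j := fun j => le_trans (hp1 j) (le_max_left _ _)
  have hinf : ∀ j, 0 ≤ (p ⊓ p') j := fun j => le_min (hp1 j) (hp2 j)
  rw [min_value_eq_smith w p hw hp1, min_value_eq_smith w p' hw hp2,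
      min_value_eq_smith w (p ⊔ p') hw hsup, min_value_eq_smith w (p ⊓ p') hw hinf]
  exact smith_supermodular w hw p p'
end

section
/- Let there be n jobs and m machines with processing times p_{i,j} > 0 for machine i ∈ {1,…,m} and job j ∈ {1,…,n}. For a subset S of jobs, define g(S) := min over injective maps φ from S into {1,…,m} × {1,…,n} of ∑_{j ∈ S} k(φ(j)) · p_{i(φ(j)), j}, where φ(j) = (i(φ(j)), k(φ(j))) assigns job j to machine i(φ(j)) in the k(φ(j))-th position from the back. Then g is supermodular: g(A) + g(B) ≤ g(A ∪ B) + g(A ∩ B) for all subsets A, B of jobs. -/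
/-- The residual-optimum cost of a job set `S`: the minimum, over assignments `φ` of the
jobs in `S` to distinct machine–slot pairs `(i, k)` (machine `i`, `k`-th position from the
back, `k ∈ {1, …, n}` encoded as `Fin n` with cost factor `k+1`), of
`∑_{j ∈ S} k(φ j) · p (i (φ j)) j`. -/
noncomputable def minMatchingCost {n m : ℕ} (p : Fin m → Fin n → ℝ) (S : Finset (Fin n)) : ℝ :=
  sInf {c : ℝ | ∃ φ : Fin n → Fin m × Fin n, Set.InjOn φ ↑S ∧
    c = ∑ j ∈ S, (((φ j).2 : ℕ) + 1 : ℝ) * p (φ j).1 j}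

lemma minMatchingCost_spec {n m : ℕ} (hm : 0 < m) (p : Fin m → Fin n → ℝ)
    (S : Finset (Fin n)) :
    (∃ φ : Fin n → Fin m × Fin n, Set.InjOn φ ↑S ∧
      minMatchingCost p S = ∑ j ∈ S, (((φ j).2 : ℕ) + 1 : ℝ) * p (φ j).1 j) ∧
    (∀ φ : Fin n → Fin m × Fin n, Set.InjOn φ ↑S →
      minMatchingCost p S ≤ ∑ j ∈ S, (((φ j).2 : ℕ) + 1 : ℝ) * p (φ j).1 j) := by
  classical
  set T := {c : ℝ | ∃ φ : Fin n → Fin m × Fin n, Set.InjOn φ ↑S ∧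
    c = ∑ j ∈ S, (((φ j).2 : ℕ) + 1 : ℝ) * p (φ j).1 j} with hT
  have hTim : T = (fun φ : Fin n → Fin m × Fin n =>
      ∑ j ∈ S, (((φ j).2 : ℕ) + 1 : ℝ) * p (φ j).1 j) '' {φ | Set.InjOn φ ↑S} := by
    ext c
    constructor
    · rintro ⟨φ, h1, h2⟩; exact ⟨φ, h1, h2.symm⟩
    · rintro ⟨φ, h1, h2⟩; exact ⟨φ, h1, h2.symm⟩
  have hfin : T.Finite := by rw [hTim]; exact Set.Finite.image _ (Set.toFinite _)
  have hne : T.Nonempty := by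
    refine ⟨_, ⟨fun j => (⟨0, hm⟩, j), ?_, rfl⟩⟩
    intro a _ b _ h
    simpa using congrArg Prod.snd h
  have hmem : sInf T ∈ T := hne.csInf_mem hfin
  constructor
  · obtain ⟨φ, h1, h2⟩ := hmem
    exact ⟨φ, h1, h2⟩
  · intro φ hφ
    exact csInf_le hfin.bddBelow ⟨φ, hφ, rfl⟩

/-- the minimum-cost bipartite assignment objective `g` (minimum total
completion time of a non-migratory schedule on unrelated machines) is supermodular as a
set function of the scheduled jobs. -/
theorem minMatchingCost_supermodular
    (n m : ℕ) (hn : 0 < n) (hm : 0 < m)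
    (p : Fin m → Fin n → ℝ) (hp : ∀ i j, 0 < p i j) :
    ∀ A B : Finset (Fin n),
      minMatchingCost p A + minMatchingCost p B ≤
        minMatchingCost p (A ∪ B) + minMatchingCost p (A ∩ B) := by
  classical
  intro A B
  obtain ⟨⟨φ1, hφ1, hc1⟩, -⟩ := minMatchingCost_spec hm p (A ∪ B)
  obtain ⟨⟨φ2, hφ2, hc2⟩, -⟩ := minMatchingCost_spec hm p (A ∩ B)
  obtain ⟨-, hleA⟩ := minMatchingCost_spec hm p A
  obtain ⟨-, hleB⟩ := minMatchingCost_spec hm p B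
  set f : (Fin n → Fin m × Fin n) → Fin n → ℝ :=
    fun φ j => (((φ j).2 : ℕ) + 1 : ℝ) * p (φ j).1 j with hf
  -- the chain-chasing map
  set H : Fin n → Fin n := fun j =>
    if h : j ∈ A ∩ B ∧ ∃ j1, j1 ∈ A ∪ B ∧ φ1 j1 = φ2 j ∧ j1 ≠ j
    then h.2.choose else j with hH
  have Hfix : ∀ j, j ∉ A ∩ B → H j = j := by
    intro j hj
    simp only [hH]
    rw [dif_neg]
    exact fun h => hj h.1
  have Hspec : ∀ j j1, j ∈ A ∩ B → j1 ∈ A ∪ B → φ1 j1 = φ2 j → j1 ≠ j → H j = j1 := by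
    intro j j1 hj hj1 he hne
    have hex : j ∈ A ∩ B ∧ ∃ j1, j1 ∈ A ∪ B ∧ φ1 j1 = φ2 j ∧ j1 ≠ j :=
      ⟨hj, j1, hj1, he, hne⟩
    simp only [hH]
    rw [dif_pos hex]
    obtain ⟨h1, h2, h3⟩ := hex.2.choose_spec
    exact hφ1 (by simpa using h1) (by simpa using hj1) (h2.trans he.symm)
  set R : Fin n → Prop := fun j => ∃ k, H^[k] j ∈ B ∧ H^[k] j ∉ A with hR
  have Rstep : ∀ j, j ∈ A → (R j ↔ R (H j)) := by
    intro j hj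
    constructor
    · rintro ⟨k, hk⟩
      cases k with
      | zero => exact absurd hj hk.2
      | succ k =>
        refine ⟨k, ?_⟩
        rwa [Function.iterate_succ_apply] at hk
    · rintro ⟨k, hk⟩
      refine ⟨k + 1, ?_⟩
      rwa [Function.iterate_succ_apply]
  have Rfix : ∀ j, H j = j → (R j ↔ (j ∈ B ∧ j ∉ A)) := by
    intro j hj
    constructor
    · rintro ⟨k, hk⟩; rwa [Function.iterate_fixed hj] at hk
    · intro h; exact ⟨0, h⟩
  have key : ∀ j j', j ∈ A ∪ B → j' ∈ A ∩ B → φ1 j = φ2 j' → j ≠ j' → (R j ↔ R j') := by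
    intro j j' hj hj' he hne
    have h := Hspec j' j hj' hj he hne
    have h2 := Rstep j' (Finset.mem_of_mem_inter_left hj')
    rw [h2, h]
  set ψA : Fin n → Fin m × Fin n := fun j => if j ∈ A ∩ B ∧ R j then φ2 j else φ1 j with hψA
  set ψB : Fin n → Fin m × Fin n := fun j => if j ∈ A ∩ B ∧ ¬ R j then φ2 j else φ1 j with hψB
  have injA : Set.InjOn ψA ↑A := by
    intro j hj j' hj' he
    simp only [Finset.mem_coe] at hj hj'
    by_contra hne
    simp only [hψA] at he
    by_cases h1 : j ∈ A ∩ B ∧ R j <;> by_cases h2 : j' ∈ A ∩ B ∧ R j'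
    · rw [if_pos h1, if_pos h2] at he
      exact hne (hφ2 (by simpa using h1.1) (by simpa using h2.1) he)
    · rw [if_pos h1, if_neg h2] at he
      -- φ2 j = φ1 j', j ∈ A∩B, R j; then R j' ↔ R j, so R j', so j' ∉ A∩B, so j' ∈ A\B
      have hk := key j' j (Finset.mem_union_left _ hj') h1.1 he.symm (Ne.symm hne)
      have hRj' : R j' := hk.mpr h1.2
      have hj'ni : j' ∉ A ∩ B := fun hin => h2 ⟨hin, hRj'⟩
      have := (Rfix j' (Hfix j' hj'ni)).mp hRj'
      exact this.2 hj'
    · rw [if_neg h1, if_pos h2] at he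
      have hk := key j j' (Finset.mem_union_left _ hj) h2.1 he hne
      have hRj : R j := hk.mpr h2.2
      have hjni : j ∉ A ∩ B := fun hin => h1 ⟨hin, hRj⟩
      have := (Rfix j (Hfix j hjni)).mp hRj
      exact this.2 hj
    · rw [if_neg h1, if_neg h2] at he
      exact hne (hφ1 (by simpa using Finset.mem_union_left B hj)
        (by simpa using Finset.mem_union_left B hj') he)
  have injB : Set.InjOn ψB ↑B := by
    intro j hj j' hj' he
    simp only [Finset.mem_coe] at hj hj'
    by_contra hne
    simp only [hψB] at he
    by_cases h1 : j ∈ A ∩ B ∧ ¬ R j <;> by_cases h2 : j' ∈ A ∩ B ∧ ¬ R j'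
    · rw [if_pos h1, if_pos h2] at he
      exact hne (hφ2 (by simpa using h1.1) (by simpa using h2.1) he)
    · rw [if_pos h1, if_neg h2] at he
      have hk := key j' j (Finset.mem_union_right _ hj') h1.1 he.symm (Ne.symm hne)
      have hRj' : ¬ R j' := fun hr => h1.2 (hk.mp hr)
      have hj'ni : j' ∉ A ∩ B := fun hin => h2 ⟨hin, hRj'⟩
      have hj'nA : j' ∉ A := fun hA => hj'ni (Finset.mem_inter.mpr ⟨hA, hj'⟩)
      exact hRj' ((Rfix j' (Hfix j' hj'ni)).mpr ⟨hj', hj'nA⟩)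
    · rw [if_neg h1, if_pos h2] at he
      have hk := key j j' (Finset.mem_union_right _ hj) h2.1 he hne
      have hRj : ¬ R j := fun hr => h2.2 (hk.mp hr)
      have hjni : j ∉ A ∩ B := fun hin => h1 ⟨hin, hRj⟩
      have hjnA : j ∉ A := fun hA => hjni (Finset.mem_inter.mpr ⟨hA, hj⟩)
      exact hRj ((Rfix j (Hfix j hjni)).mpr ⟨hj, hjnA⟩)
    · rw [if_neg h1, if_neg h2] at he
      exact hne (hφ1 (by simpa using Finset.mem_union_right A hj)
        (by simpa using Finset.mem_union_right A hj') he)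
  -- cost bookkeeping
  have hIA : A ∩ B ⊆ A := Finset.inter_subset_left
  have hIB : A ∩ B ⊆ B := Finset.inter_subset_right
  have hsA : ∑ j ∈ A, f ψA j = ∑ j ∈ A \ B, f φ1 j + ∑ j ∈ A ∩ B, f ψA j := by
    rw [← Finset.sum_sdiff hIA, Finset.sdiff_inter_self_left]
    congr 1
    refine Finset.sum_congr rfl fun j hj => ?_
    have : j ∉ A ∩ B := by
      rw [Finset.mem_sdiff] at hj
      simp [Finset.mem_inter, hj.2]
    simp only [hψA, hf]
    rw [if_neg (fun h => this h.1)]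
  have hsB : ∑ j ∈ B, f ψB j = ∑ j ∈ B \ A, f φ1 j + ∑ j ∈ A ∩ B, f ψB j := by
    rw [← Finset.sum_sdiff hIB, Finset.sdiff_inter_self_right]
    congr 1
    refine Finset.sum_congr rfl fun j hj => ?_
    have : j ∉ A ∩ B := by
      rw [Finset.mem_sdiff] at hj
      simp [Finset.mem_inter, hj.2]
    simp only [hψB, hf]
    rw [if_neg (fun h => this h.1)]
  have hswap : ∑ j ∈ A ∩ B, (f ψA j + f ψB j) = ∑ j ∈ A ∩ B, (f φ1 j + f φ2 j) := by
    refine Finset.sum_congr rfl fun j hj => ?_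
    by_cases hr : R j
    · simp only [hψA, hψB, hf]
      rw [if_pos ⟨hj, hr⟩, if_neg (fun h => h.2 hr)]
      ring
    · simp only [hψA, hψB, hf]
      rw [if_neg (fun h => hr h.2), if_pos ⟨hj, hr⟩]
  have hU : ∑ j ∈ A ∪ B, f φ1 j
      = ∑ j ∈ B \ A, f φ1 j + (∑ j ∈ A \ B, f φ1 j + ∑ j ∈ A ∩ B, f φ1 j) := by
    rw [← Finset.sum_sdiff (Finset.subset_union_left (s₁ := A) (s₂ := B)),
      Finset.union_sdiff_left, ← Finset.sum_sdiff hIA, Finset.sdiff_inter_self_left]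
  have hmain : ∑ j ∈ A, f ψA j + ∑ j ∈ B, f ψB j
      = ∑ j ∈ A ∪ B, f φ1 j + ∑ j ∈ A ∩ B, f φ2 j := by
    rw [hsA, hsB, hU]
    have h1 := Finset.sum_add_distrib (s := A ∩ B) (f := fun j => f ψA j) (g := fun j => f ψB j)
    have h2 := Finset.sum_add_distrib (s := A ∩ B) (f := fun j => f φ1 j) (g := fun j => f φ2 j)
    rw [h1, h2] at hswap
    linarith
  have h1 : minMatchingCost p A ≤ ∑ j ∈ A, f ψA j := hleA ψA injA
  have h2 : minMatchingCost p B ≤ ∑ j ∈ B, f ψB j := hleB ψB injB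
  replace hc1 : minMatchingCost p (A ∪ B) = ∑ j ∈ A ∪ B, f φ1 j := hc1
  replace hc2 : minMatchingCost p (A ∩ B) = ∑ j ∈ A ∩ B, f φ2 j := hc2
  rw [hc1, hc2]
  linarith
end
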